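/- arXiv:1811.10023 — 5 statements merged into one kernel-verified Lean document; each statement's English description precedes it below -/
import Mathlib

section
/- For every β > 0, the function ratio R(β) = K₁(β)/K₂(β) satisfies the Riccati-type differential equation R'(β) = (3/β)R(β) + R(β)² - 1. -/
open MeasureTheory Real Set

noncomputable def K0 (β : ℝ) : ℝ :=
  ∫ y in Set.Ioi (0:ℝ), (1 / Real.sqrt (1 + y^2)) * Real.exp (-β * Real.sqrt (1 + y^2))

noncomputable def K1 (β : ℝ) : ℝ :=
  ∫ y in Set.Ioi (0:ℝ), Real.exp (-β * Real.sqrt (1 + y^2))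

noncomputable def K2 (β : ℝ) : ℝ :=
  ∫ y in Set.Ioi (0:ℝ), ((2*y^2 + 1) / Real.sqrt (1 + y^2)) * Real.exp (-β * Real.sqrt (1 + y^2))

noncomputable def Mfun (β : ℝ) : ℝ :=
  ∫ q : EuclideanSpace ℝ (Fin 3), Real.exp (-β * Real.sqrt (1 + ‖q‖^2))

open Filter Topology Asymptotics

lemma rk_upos (y : ℝ) : 0 < Real.sqrt (1 + y^2) := Real.sqrt_pos.2 (by positivity)
lemma rk_usq (y : ℝ) : (Real.sqrt (1 + y^2))^2 = 1 + y^2 := Real.sq_sqrt (by positivity)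
lemma rk_one_le_u (y : ℝ) : 1 ≤ Real.sqrt (1 + y^2) :=
  (Real.le_sqrt zero_le_one (by positivity)).2 (by nlinarith)
lemma rk_self_le_u {y : ℝ} (hy : 0 ≤ y) : y ≤ Real.sqrt (1 + y^2) :=
  (Real.le_sqrt hy (by positivity)).2 (by nlinarith)
lemma rk_u_le (y : ℝ) : Real.sqrt (1 + y^2) ≤ 1 + y^2 := by
  have h := Real.sqrt_le_sqrt (show (1:ℝ)+y^2 ≤ (1+y^2)^2 by nlinarith)
  rwa [Real.sqrt_sq (by positivity : (0:ℝ) ≤ 1+y^2)] at h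
lemma rk_ucont : Continuous (fun y : ℝ => Real.sqrt (1 + y^2)) :=
  Real.continuous_sqrt.comp (by continuity)

lemma rk_tendsto_pow (n : ℕ) {b : ℝ} (hb : 0 < b) :
    Tendsto (fun y : ℝ => y^n * Real.exp (-b * y)) atTop (𝓝 0) := by
  have h := (tendsto_pow_mul_exp_neg_atTop_nhds_zero n).comp
    (tendsto_id.const_mul_atTop hb)
  have h2 := h.const_mul ((1:ℝ)/b^n)
  rw [mul_zero] at h2
  refine h2.congr fun y => ?_
  simp only [Function.comp, id_eq]
  rw [mul_pow]
  field_simp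

lemma rk_integrable {b : ℝ} (hb : 0 < b) {P : ℝ → ℝ} (hP : Continuous P)
    (hbd : ∀ y, 0 ≤ y → |P y| ≤ 3*(1+y^2)) :
    IntegrableOn (fun y => P y * Real.exp (-b * Real.sqrt (1+y^2))) (Ioi 0) := by
  apply integrable_of_isBigO_exp_neg (half_pos hb)
  · exact (hP.mul ((rk_ucont.const_smul (-b)).rexp : Continuous _)).continuousOn
  · rw [isBigO_iff]
    refine ⟨1, ?_⟩
    have hten : Tendsto (fun y : ℝ => 3*(1+y^2) * Real.exp (-(b/2) * y)) atTop (𝓝 0) := by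
      have h0 := (rk_tendsto_pow 0 (half_pos hb)).const_mul (3:ℝ)
      have h2 := (rk_tendsto_pow 2 (half_pos hb)).const_mul (3:ℝ)
      rw [mul_zero] at h0 h2
      have := h0.add h2
      rw [add_zero] at this
      refine this.congr fun y => ?_
      ring
    have hev : ∀ᶠ y : ℝ in atTop, 3*(1+y^2) * Real.exp (-(b/2) * y) ≤ 1 := by
      filter_upwards [hten.eventually (eventually_le_nhds (by norm_num : (0:ℝ) < 1))] with y hy
      exact hy
    filter_upwards [hev, eventually_ge_atTop (0:ℝ)] with y hy hy0
    have hu := rk_self_le_u hy0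
    have key : |P y| * Real.exp (-b * Real.sqrt (1+y^2))
        ≤ 3*(1+y^2) * Real.exp (-b * y) := by
      apply mul_le_mul (hbd y hy0) (Real.exp_le_exp.2 (by nlinarith)) (Real.exp_pos _).le
        (by positivity)
    have split : Real.exp (-b * y) = Real.exp (-(b/2) * y) * Real.exp (-(b/2) * y) := by
      rw [← Real.exp_add]; ring_nf
    rw [norm_mul, Real.norm_eq_abs, Real.norm_eq_abs, Real.abs_exp, Real.norm_eq_abs,
      Real.abs_exp, one_mul]
    calc |P y| * Real.exp (-b * Real.sqrt (1+y^2)) ≤ 3*(1+y^2) * Real.exp (-b * y) := key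
      _ = (3*(1+y^2) * Real.exp (-(b/2)*y)) * Real.exp (-(b/2)*y) := by rw [split]; ring
      _ ≤ 1 * Real.exp (-(b/2)*y) := by
          apply mul_le_mul_of_nonneg_right hy (Real.exp_pos _).le
      _ = Real.exp (-(b/2)*y) := one_mul _

lemma rk_exp_hasDerivAt (u : ℝ) (x : ℝ) :
    HasDerivAt (fun b : ℝ => Real.exp (-b * u)) (-u * Real.exp (-x * u)) x := by
  have h : HasDerivAt (fun b : ℝ => -b * u) (-u) x := by
    have h0 := (hasDerivAt_id x).const_mul (-u)
    simp only [mul_one, id_eq] at h0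
    exact h0.congr_of_eventuallyEq (Filter.Eventually.of_forall fun b => by ring)
  simpa [mul_comm] using h.exp

lemma rk_deriv {β : ℝ} (hβ : 0 < β) {Q : ℝ → ℝ} (hQc : Continuous Q)
    (hbd : ∀ y, 0 ≤ y → |Q y| * Real.sqrt (1+y^2) ≤ 3*(1+y^2)) :
    HasDerivAt (fun b => ∫ y in Ioi (0:ℝ), Q y * Real.exp (-b * Real.sqrt (1+y^2)))
      (∫ y in Ioi (0:ℝ),
        (-(Q y * Real.sqrt (1+y^2))) * Real.exp (-β * Real.sqrt (1+y^2))) β := by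
  have hQbd : ∀ y, 0 ≤ y → |Q y| ≤ 3*(1+y^2) := fun y hy =>
    (le_mul_of_one_le_right (abs_nonneg _) (rk_one_le_u y)).trans (hbd y hy)
  have hcont : ∀ x : ℝ, Continuous fun y => Q y * Real.exp (-x * Real.sqrt (1+y^2)) :=
    fun x => hQc.mul ((rk_ucont.const_smul (-x)).rexp : Continuous _)
  have main := hasDerivAt_integral_of_dominated_loc_of_deriv_le (μ := volume.restrict (Ioi 0))
    (F := fun b y => Q y * Real.exp (-b * Real.sqrt (1+y^2)))
    (F' := fun b y => (-(Q y * Real.sqrt (1+y^2))) * Real.exp (-b * Real.sqrt (1+y^2)))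
    (bound := fun y => 3*(1+y^2) * Real.exp (-(β/2) * Real.sqrt (1+y^2)))
    (Metric.ball_mem_nhds β (half_pos hβ))
    (Filter.Eventually.of_forall fun x => (hcont x).aestronglyMeasurable)
    (rk_integrable hβ hQc hQbd)
    ((hQc.mul rk_ucont).neg.mul ((rk_ucont.const_smul (-β)).rexp : Continuous _)).aestronglyMeasurable
    ?_ ?_ ?_
  · exact main.2
  · rw [ae_restrict_iff' measurableSet_Ioi]
    refine Filter.Eventually.of_forall fun y hy x hx => ?_
    have hy0 : (0:ℝ) ≤ y := le_of_lt hy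
    have hx2 : β/2 ≤ x := by
      have := abs_lt.1 (mem_ball_iff_norm.1 hx); linarith [this.1]
    have hu := rk_upos y
    rw [norm_mul, norm_neg, norm_mul, Real.norm_eq_abs, Real.norm_eq_abs, Real.norm_eq_abs,
      Real.abs_exp, abs_of_pos hu]
    exact mul_le_mul (hbd y hy0) (Real.exp_le_exp.2 (by nlinarith)) (Real.exp_pos _).le
      (by positivity)
  · exact rk_integrable (half_pos hβ) (by continuity)
      (fun y hy => by rw [abs_of_nonneg (by positivity)])
  · refine Filter.Eventually.of_forall fun y x _ => ?_
    have := (rk_exp_hasDerivAt (Real.sqrt (1+y^2)) x).const_mul (Q y)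
    refine this.congr_deriv (Eq.symm ?_)
    ring

lemma rk_sqrt_hasDerivAt (y : ℝ) :
    HasDerivAt (fun y : ℝ => Real.sqrt (1+y^2)) (y / Real.sqrt (1+y^2)) y := by
  have h1 : HasDerivAt (fun y : ℝ => 1 + y^2) (2*y) y := by
    simpa using (hasDerivAt_pow 2 y).const_add 1
  have hs := (Real.hasDerivAt_sqrt (ne_of_gt (by positivity : (0:ℝ) < 1+y^2))).comp y h1
  refine hs.congr_deriv (Eq.symm ?_)
  have h0 := (rk_upos y).ne'
  field_simp

lemma rk_expy_hasDerivAt (β y : ℝ) :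
    HasDerivAt (fun y : ℝ => Real.exp (-β * Real.sqrt (1+y^2)))
      (Real.exp (-β * Real.sqrt (1+y^2)) * (-β * (y / Real.sqrt (1+y^2)))) y :=
  ((rk_sqrt_hasDerivAt y).const_mul (-β)).exp

lemma rk_int_exp {β : ℝ} (hβ : 0 < β) :
    IntegrableOn (fun y => Real.exp (-β * Real.sqrt (1+y^2))) (Ioi 0) := by
  have := rk_integrable hβ (continuous_const : Continuous (fun _ : ℝ => (1:ℝ)))
    (fun y hy => by rw [abs_one]; nlinarith)
  simpa using this

lemma rk_int_u {β : ℝ} (hβ : 0 < β) :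
    IntegrableOn (fun y => Real.sqrt (1+y^2) * Real.exp (-β * Real.sqrt (1+y^2))) (Ioi 0) :=
  rk_integrable hβ rk_ucont (fun y hy => by
    rw [abs_of_pos (rk_upos y)]; nlinarith [rk_u_le y])

lemma rk_int_y2u {β : ℝ} (hβ : 0 < β) :
    IntegrableOn (fun y => (y^2 / Real.sqrt (1+y^2)) * Real.exp (-β * Real.sqrt (1+y^2)))
      (Ioi 0) :=
  rk_integrable hβ ((continuous_pow 2).div rk_ucont (fun y => (rk_upos y).ne'))
    (fun y hy => by
      rw [abs_of_nonneg (by positivity)]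
      nlinarith [div_le_self (sq_nonneg y) (rk_one_le_u y)])

lemma rk_int_y2 {β : ℝ} (hβ : 0 < β) :
    IntegrableOn (fun y => y^2 * Real.exp (-β * Real.sqrt (1+y^2))) (Ioi 0) :=
  rk_integrable hβ (continuous_pow 2)
    (fun y hy => by rw [abs_of_nonneg (sq_nonneg y)]; nlinarith)

lemma rk_ibpA {β : ℝ} (hβ : 0 < β) :
    (∫ y in Ioi (0:ℝ), Real.exp (-β * Real.sqrt (1+y^2)))
      = β * ∫ y in Ioi (0:ℝ), (y^2 / Real.sqrt (1+y^2)) * Real.exp (-β * Real.sqrt (1+y^2)) := by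
  have hderiv : ∀ x ∈ Ici (0:ℝ), HasDerivAt (fun y => y * Real.exp (-β * Real.sqrt (1+y^2)))
      (Real.exp (-β * Real.sqrt (1+x^2))
        - β * ((x^2 / Real.sqrt (1+x^2)) * Real.exp (-β * Real.sqrt (1+x^2)))) x := by
    intro x _
    have h := (hasDerivAt_id x).mul (rk_expy_hasDerivAt β x)
    refine h.congr_deriv (Eq.symm ?_)
    simp only [id_eq, one_mul]
    ring
  have f'int : IntegrableOn (fun x => Real.exp (-β * Real.sqrt (1+x^2))
      - β * ((x^2 / Real.sqrt (1+x^2)) * Real.exp (-β * Real.sqrt (1+x^2)))) (Ioi 0) :=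
    (rk_int_exp hβ).sub ((rk_int_y2u hβ).const_mul β)
  have htend : Tendsto (fun y : ℝ => y * Real.exp (-β * Real.sqrt (1+y^2))) atTop (𝓝 0) := by
    apply squeeze_zero_norm' (a := fun y : ℝ => y^1 * Real.exp (-β * y))
    · filter_upwards [eventually_ge_atTop (0:ℝ)] with y hy
      rw [norm_mul, Real.norm_eq_abs, Real.norm_eq_abs, abs_of_nonneg hy, Real.abs_exp, pow_one]
      exact mul_le_mul_of_nonneg_left
        (Real.exp_le_exp.2 (by nlinarith [rk_self_le_u hy])) hy
    · exact rk_tendsto_pow 1 hβ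
  have key := integral_Ioi_of_hasDerivAt_of_tendsto' hderiv f'int htend
  rw [integral_sub (rk_int_exp hβ) ((rk_int_y2u hβ).const_mul β), integral_const_mul] at key
  simp only [zero_mul] at key
  linarith [key]

lemma rk_ibpB {β : ℝ} (hβ : 0 < β) :
    (∫ y in Ioi (0:ℝ), Real.sqrt (1+y^2) * Real.exp (-β * Real.sqrt (1+y^2)))
      + (∫ y in Ioi (0:ℝ), (y^2 / Real.sqrt (1+y^2)) * Real.exp (-β * Real.sqrt (1+y^2)))
      = β * ∫ y in Ioi (0:ℝ), y^2 * Real.exp (-β * Real.sqrt (1+y^2)) := by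
  have hderiv : ∀ x ∈ Ici (0:ℝ),
      HasDerivAt (fun y => (y * Real.sqrt (1+y^2)) * Real.exp (-β * Real.sqrt (1+y^2)))
      ((Real.sqrt (1+x^2) * Real.exp (-β * Real.sqrt (1+x^2))
          + (x^2 / Real.sqrt (1+x^2)) * Real.exp (-β * Real.sqrt (1+x^2)))
        - β * (x^2 * Real.exp (-β * Real.sqrt (1+x^2)))) x := by
    intro x _
    have hyu := (hasDerivAt_id x).mul (rk_sqrt_hasDerivAt x)
    have h := hyu.mul (rk_expy_hasDerivAt β x)
    refine h.congr_deriv (Eq.symm ?_)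
    simp only [id_eq, one_mul, Pi.mul_apply]
    have h0 := (rk_upos x).ne'
    have husq := rk_usq x
    set E := Real.exp (-β * Real.sqrt (1+x^2)) with hE
    field_simp
    ring
  have f'int : IntegrableOn (fun x => (Real.sqrt (1+x^2) * Real.exp (-β * Real.sqrt (1+x^2))
          + (x^2 / Real.sqrt (1+x^2)) * Real.exp (-β * Real.sqrt (1+x^2)))
        - β * (x^2 * Real.exp (-β * Real.sqrt (1+x^2)))) (Ioi 0) :=
    ((rk_int_u hβ).add (rk_int_y2u hβ)).sub ((rk_int_y2 hβ).const_mul β)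
  have htend : Tendsto (fun y : ℝ => (y * Real.sqrt (1+y^2)) * Real.exp (-β * Real.sqrt (1+y^2)))
      atTop (𝓝 0) := by
    apply squeeze_zero_norm'
      (a := fun y : ℝ => y^1 * Real.exp (-β * y) + y^3 * Real.exp (-β * y))
    · filter_upwards [eventually_ge_atTop (0:ℝ)] with y hy
      rw [norm_mul, norm_mul, Real.norm_eq_abs, Real.norm_eq_abs, Real.norm_eq_abs,
        abs_of_nonneg hy, abs_of_pos (rk_upos y), Real.abs_exp]
      have h1 : y * Real.sqrt (1+y^2) ≤ y^1 + y^3 := by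
        have := rk_u_le y
        nlinarith
      have h2 : Real.exp (-β * Real.sqrt (1+y^2)) ≤ Real.exp (-β * y) :=
        Real.exp_le_exp.2 (by nlinarith [rk_self_le_u hy])
      calc y * Real.sqrt (1+y^2) * Real.exp (-β * Real.sqrt (1+y^2))
          ≤ (y^1 + y^3) * Real.exp (-β * y) := by
            apply mul_le_mul h1 h2 (Real.exp_pos _).le (by positivity)
        _ = y^1 * Real.exp (-β * y) + y^3 * Real.exp (-β * y) := by ring
    · have := (rk_tendsto_pow 1 hβ).add (rk_tendsto_pow 3 hβ)
      rwa [add_zero] at this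
  have key := integral_Ioi_of_hasDerivAt_of_tendsto' hderiv f'int htend
  have h12 : IntegrableOn (fun x => Real.sqrt (1+x^2) * Real.exp (-β * Real.sqrt (1+x^2))
      + (x^2 / Real.sqrt (1+x^2)) * Real.exp (-β * Real.sqrt (1+x^2))) (Ioi 0) :=
    (rk_int_u hβ).add (rk_int_y2u hβ)
  rw [integral_sub h12 ((rk_int_y2 hβ).const_mul β),
    integral_add (rk_int_u hβ) (rk_int_y2u hβ), integral_const_mul] at key
  simp only [zero_mul] at key
  linarith [key]

lemma rk_K2_split {β : ℝ} (hβ : 0 < β) :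
    (∫ y in Ioi (0:ℝ), ((2*y^2 + 1) / Real.sqrt (1 + y^2)) * Real.exp (-β * Real.sqrt (1 + y^2)))
      = (∫ y in Ioi (0:ℝ), Real.sqrt (1+y^2) * Real.exp (-β * Real.sqrt (1+y^2)))
        + ∫ y in Ioi (0:ℝ), (y^2 / Real.sqrt (1+y^2)) * Real.exp (-β * Real.sqrt (1+y^2)) := by
  have hfun : ∀ y : ℝ, ((2*y^2 + 1) / Real.sqrt (1 + y^2)) * Real.exp (-β * Real.sqrt (1 + y^2))
      = Real.sqrt (1+y^2) * Real.exp (-β * Real.sqrt (1+y^2))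
        + (y^2 / Real.sqrt (1+y^2)) * Real.exp (-β * Real.sqrt (1+y^2)) := by
    intro y
    have h0 := (rk_upos y).ne'
    have husq := rk_usq y
    set E := Real.exp (-β * Real.sqrt (1+y^2)) with hE
    field_simp
    linear_combination (-E) * husq
  simp only [hfun]
  rw [integral_add (rk_int_u hβ) (rk_int_y2u hβ)]

lemma rk_Iy2_pos {β : ℝ} (hβ : 0 < β) :
    0 < ∫ y in Ioi (0:ℝ), y^2 * Real.exp (-β * Real.sqrt (1+y^2)) := by
  rw [setIntegral_pos_iff_support_of_nonneg_ae
    (Filter.Eventually.of_forall fun y => by positivity) (rk_int_y2 hβ)]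
  have hsub : Ioi (0:ℝ) ⊆
      Function.support (fun y => y^2 * Real.exp (-β * Real.sqrt (1+y^2))) ∩ Ioi 0 := by
    intro y hy
    refine ⟨?_, hy⟩
    have hy0 : (0:ℝ) < y := hy
    exact ne_of_gt (by positivity)
  calc (0:ENNReal) < volume (Ioi (0:ℝ)) := by rw [Real.volume_Ioi]; exact ENNReal.zero_lt_top
    _ ≤ _ := measure_mono hsub

theorem riccati_K1_div_K2 (β : ℝ) (hβ : 0 < β) :
    deriv (fun b => K1 b / K2 b) β
      = (3 / β) * (K1 β / K2 β) + (K1 β / K2 β)^2 - 1 := by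
  have hd1 : HasDerivAt K1
      (-(∫ y in Ioi (0:ℝ), Real.sqrt (1+y^2) * Real.exp (-β * Real.sqrt (1+y^2)))) β := by
    have h := rk_deriv hβ (continuous_const : Continuous fun _ : ℝ => (1:ℝ))
      (fun y hy => by rw [abs_one, one_mul]; nlinarith [rk_u_le y])
    simp only [one_mul] at h
    have hc : ∀ y : ℝ, (-Real.sqrt (1+y^2)) * Real.exp (-β * Real.sqrt (1+y^2))
        = -(Real.sqrt (1+y^2) * Real.exp (-β * Real.sqrt (1+y^2))) := fun y => by ring
    simp only [hc] at h
    rw [integral_neg] at h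
    exact h
  have hd2 : HasDerivAt K2
      (-(2 * (∫ y in Ioi (0:ℝ), y^2 * Real.exp (-β * Real.sqrt (1+y^2))) + K1 β)) β := by
    have hQc : Continuous fun y : ℝ => (2*y^2 + 1) / Real.sqrt (1 + y^2) :=
      (by continuity : Continuous fun y : ℝ => 2*y^2+1).div rk_ucont fun y => (rk_upos y).ne'
    have h := rk_deriv hβ hQc (fun y hy => by
      rw [abs_of_nonneg (by positivity), div_mul_cancel₀ _ (rk_upos y).ne']
      nlinarith)
    have hc1 : ∀ y : ℝ, (-((2*y^2+1) / Real.sqrt (1+y^2) * Real.sqrt (1+y^2)))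
        * Real.exp (-β * Real.sqrt (1+y^2))
        = -(2 * (y^2 * Real.exp (-β * Real.sqrt (1+y^2)))
            + Real.exp (-β * Real.sqrt (1+y^2))) := by
      intro y
      rw [div_mul_cancel₀ _ (rk_upos y).ne']
      ring
    simp only [hc1] at h
    rw [integral_neg, integral_add ((rk_int_y2 hβ).const_mul 2) (rk_int_exp hβ),
      integral_const_mul] at h
    exact h
  have eq1 : K1 β = β * ∫ y in Ioi (0:ℝ),
      (y^2 / Real.sqrt (1+y^2)) * Real.exp (-β * Real.sqrt (1+y^2)) := rk_ibpA hβ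
  have eq2 := rk_ibpB hβ
  have eq3 : K2 β = (∫ y in Ioi (0:ℝ), Real.sqrt (1+y^2) * Real.exp (-β * Real.sqrt (1+y^2)))
      + ∫ y in Ioi (0:ℝ), (y^2 / Real.sqrt (1+y^2)) * Real.exp (-β * Real.sqrt (1+y^2)) :=
    rk_K2_split hβ
  have hy2pos := rk_Iy2_pos hβ
  have hK2pos : 0 < K2 β := by
    rw [eq3, eq2]; positivity
  have hd := hd1.div hd2 hK2pos.ne'
  rw [show (fun b => K1 b / K2 b) = K1 / K2 from rfl, hd.deriv]
  have h5 : (∫ y in Ioi (0:ℝ), (y^2 / Real.sqrt (1+y^2)) * Real.exp (-β * Real.sqrt (1+y^2)))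
      = K1 β / β := by
    rw [eq1, mul_comm, mul_div_assoc, div_self hβ.ne', mul_one]
  have h6 : (∫ y in Ioi (0:ℝ), y^2 * Real.exp (-β * Real.sqrt (1+y^2))) = K2 β / β := by
    have hK : K2 β = β * ∫ y in Ioi (0:ℝ), y^2 * Real.exp (-β * Real.sqrt (1+y^2)) :=
      eq3.trans eq2
    rw [hK, mul_comm, mul_div_assoc, div_self hβ.ne', mul_one]
  have hIu2 : (∫ y in Ioi (0:ℝ), Real.sqrt (1+y^2) * Real.exp (-β * Real.sqrt (1+y^2)))
      = K2 β - K1 β / β := by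
    rw [h5] at eq3
    linarith
  rw [hIu2, h6]
  field_simp
  ring
end

section
/- For every β ≥ 1, K₀(β) + K₁(β) ≤ (1/2)e^{-β}(8 + 1/β - 3/(16β²) + 45/(64β³))·√(π/(8β)). -/
open MeasureTheory Real Set

lemma sqrt_poly_bound (z : ℝ) : Real.sqrt (1+z^2) ≤ 1 + z^2/2 - z^4/8 + 3*z^6/8 := by
  have hP : (0:ℝ) ≤ 1 + z^2/2 - z^4/8 + 3*z^6/8 := by
    nlinarith [mul_nonneg (sq_nonneg (1 - z^2)) (sq_nonneg z), sq_nonneg z, sq_nonneg (z^2)]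
  have h2 : 1 + z^2 ≤ (1 + z^2/2 - z^4/8 + 3*z^6/8)^2 := by
    nlinarith [mul_nonneg (mul_nonneg (sq_nonneg (z^2 - 5/6)) (sq_nonneg (z^2))) (sq_nonneg z),
      sq_nonneg z, sq_nonneg (z^2), pow_nonneg (sq_nonneg z) 3]
  calc Real.sqrt (1+z^2) ≤ Real.sqrt ((1 + z^2/2 - z^4/8 + 3*z^6/8)^2) := Real.sqrt_le_sqrt h2
  _ = _ := Real.sqrt_sq hP

lemma hasDeriv_f (z : ℝ) : HasDerivAt (fun z : ℝ => 2*z*Real.sqrt (1+z^2))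
    (2*(1+2*z^2)/Real.sqrt (1+z^2)) z := by
  have h0 : (0:ℝ) < 1 + z^2 := by positivity
  have hu : 0 < Real.sqrt (1+z^2) := Real.sqrt_pos.2 h0
  have h1 : HasDerivAt (fun z : ℝ => 1+z^2) (2*z) z := by
    simpa using ((hasDerivAt_pow 2 z).const_add 1)
  have h2 : HasDerivAt (fun z : ℝ => Real.sqrt (1+z^2)) (1/(2*Real.sqrt (1+z^2)) * (2*z)) z :=
    (Real.hasDerivAt_sqrt h0.ne').comp z h1
  have h3 : HasDerivAt (fun z : ℝ => 2*z) 2 z := by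
    simpa using (hasDerivAt_id z).const_mul 2
  have h4 := h3.mul h2
  refine h4.congr_deriv ?_
  have hu2 : Real.sqrt (1+z^2) ^ 2 = 1 + z^2 := Real.sq_sqrt h0.le
  field_simp
  nlinarith [hu2]

lemma image_f : (fun z : ℝ => 2*z*Real.sqrt (1+z^2)) '' Ioi 0 = Ioi 0 := by
  ext y
  simp only [mem_image, mem_Ioi]
  constructor
  · rintro ⟨z, hz, rfl⟩
    have : 0 < Real.sqrt (1+z^2) := Real.sqrt_pos.2 (by positivity)
    positivity
  · intro hy
    have hsy : (1:ℝ) ≤ Real.sqrt (1+y^2) := by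
      nth_rewrite 1 [show (1:ℝ) = Real.sqrt 1 by simp]
      exact Real.sqrt_le_sqrt (by nlinarith)
    have hsy' : (1:ℝ) < Real.sqrt (1+y^2) := by
      nth_rewrite 1 [show (1:ℝ) = Real.sqrt 1 by simp]
      exact Real.sqrt_lt_sqrt (by norm_num) (by nlinarith)
    set s := Real.sqrt (1+y^2) with hsdef
    refine ⟨Real.sqrt ((s-1)/2), Real.sqrt_pos.2 (by linarith), ?_⟩
    have hz2 : Real.sqrt ((s-1)/2) ^ 2 = (s-1)/2 := Real.sq_sqrt (by linarith)
    have h1z : 1 + Real.sqrt ((s-1)/2)^2 = (s+1)/2 := by rw [hz2]; ring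
    have hs2 : s^2 = 1 + y^2 := Real.sq_sqrt (by positivity)
    rw [h1z, show (2:ℝ) * Real.sqrt ((s-1)/2) * Real.sqrt ((s+1)/2)
        = 2 * Real.sqrt (((s-1)/2) * ((s+1)/2)) by rw [Real.sqrt_mul (by linarith)]; ring,
      show ((s-1)/2) * ((s+1)/2) = (y/2)^2 by nlinarith, Real.sqrt_sq (by linarith)]
    ring

lemma injOn_f : InjOn (fun z : ℝ => 2*z*Real.sqrt (1+z^2)) (Ioi 0) := by
  apply StrictMonoOn.injOn
  intro a ha b hb hab
  simp only [mem_Ioi] at ha hb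
  have h1 : Real.sqrt (1+a^2) ≤ Real.sqrt (1+b^2) := Real.sqrt_le_sqrt (by nlinarith)
  have h2 : 0 < Real.sqrt (1+a^2) := Real.sqrt_pos.2 (by positivity)
  simp only
  nlinarith

lemma aux_integrable1 {β : ℝ} (hβ : 1 ≤ β) :
    IntegrableOn (fun y => Real.exp (-β * Real.sqrt (1 + y^2))) (Ioi 0) := by
  have hb : (0:ℝ) < β := lt_of_lt_of_le one_pos hβ
  refine Integrable.mono' (exp_neg_integrableOn_Ioi 0 hb) ?_ ?_
  · exact (Continuous.aestronglyMeasurable (by fun_prop)).restrict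
  · filter_upwards [ae_restrict_mem measurableSet_Ioi] with y _
    rw [Real.norm_eq_abs, abs_of_pos (Real.exp_pos _), Real.exp_le_exp]
    have h : y ≤ Real.sqrt (1+y^2) := by
      calc y ≤ |y| := le_abs_self y
      _ = Real.sqrt (y^2) := (Real.sqrt_sq_eq_abs y).symm
      _ ≤ _ := Real.sqrt_le_sqrt (by nlinarith)
    nlinarith

lemma aux_integrable0 {β : ℝ} (hβ : 1 ≤ β) :
    IntegrableOn (fun y => (1 / Real.sqrt (1 + y^2)) * Real.exp (-β * Real.sqrt (1 + y^2)))
      (Ioi 0) := by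
  refine (aux_integrable1 hβ).mono' ?_ ?_
  · exact (Continuous.aestronglyMeasurable (by fun_prop (disch := intro x; positivity))).restrict
  · filter_upwards [ae_restrict_mem measurableSet_Ioi] with y _
    have h1 : (1:ℝ) ≤ Real.sqrt (1+y^2) := by
      nth_rewrite 1 [show (1:ℝ) = Real.sqrt 1 by simp]
      exact Real.sqrt_le_sqrt (by nlinarith)
    rw [Real.norm_eq_abs, abs_mul, abs_of_pos (Real.exp_pos _),
      abs_of_pos (by positivity : (0:ℝ) < 1 / Real.sqrt (1+y^2))]
    nth_rewrite 2 [show Real.exp (-β * Real.sqrt (1 + y^2))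
        = 1 * Real.exp (-β * Real.sqrt (1 + y^2)) by ring]
    apply mul_le_mul_of_nonneg_right _ (Real.exp_pos _).le
    rw [div_le_one (by linarith)]
    exact h1

lemma moment_integrable {b : ℝ} (hb : 0 < b) (n : ℕ) :
    IntegrableOn (fun z : ℝ => z^n * Real.exp (-b * z^2)) (Ioi 0) := by
  have h := integrableOn_rpow_mul_exp_neg_mul_sq hb (s := (n:ℝ))
    (by have : (0:ℝ) ≤ (n:ℝ) := Nat.cast_nonneg n; linarith)
  apply h.congr_fun ?_ measurableSet_Ioi
  intro x hx
  simp [Real.rpow_natCast]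

lemma moment_val {b : ℝ} (hb : 0 < b) (n : ℕ) :
    ∫ z in Ioi (0:ℝ), z^n * Real.exp (-b * z^2)
      = b ^ (-((n:ℝ)+1)/2) * (1/2) * Real.Gamma (((n:ℝ)+1)/2) := by
  rw [← integral_rpow_mul_exp_neg_mul_rpow two_pos
    (by have : (0:ℝ) ≤ (n:ℝ) := Nat.cast_nonneg n; linarith) hb]
  apply setIntegral_congr_fun measurableSet_Ioi
  intro x hx
  dsimp only
  rw [Real.rpow_natCast, show ((2:ℝ)) = ((2:ℕ):ℝ) by norm_num, Real.rpow_natCast]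

lemma rpow_half_neg {b : ℝ} (hb : 0 < b) (m : ℕ) :
    b ^ (-((m:ℝ))/2) = (Real.sqrt b ^ m)⁻¹ := by
  rw [show -((m:ℝ))/2 = (1/2)*(-(m:ℝ)) by ring, Real.rpow_mul hb.le, ← Real.sqrt_eq_rpow,
    Real.rpow_neg (Real.sqrt_nonneg b), Real.rpow_natCast]

lemma final_alg (s E P β : ℝ) (hβ : β = s^2/2) (hs0 : 0 < s) :
    4*E*( (s^1)⁻¹*(1/2)*P + (1/2)*((s^3)⁻¹*(1/2)*((1/2)*P))
      - (1/8)*((s^5)⁻¹*(1/2)*((3/4)*P)) + (3/8)*((s^7)⁻¹*(1/2)*((15/8)*P)) )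
    = (1/2)*E*(8 + 1/β - 3/(16*β^2) + 45/(64*β^3)) * (P/(2*s)) := by
  subst hβ
  field_simp
  ring

lemma G12 : Real.Gamma ((1:ℝ)/2) = Real.sqrt π := Real.Gamma_one_half_eq

lemma G32 : Real.Gamma ((3:ℝ)/2) = (1/2) * Real.sqrt π := by
  rw [show (3:ℝ)/2 = 1/2 + 1 by norm_num, Real.Gamma_add_one (by norm_num), G12]

lemma G52 : Real.Gamma ((5:ℝ)/2) = (3/4) * Real.sqrt π := by
  rw [show (5:ℝ)/2 = 3/2 + 1 by norm_num, Real.Gamma_add_one (by norm_num), G32]; ring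

lemma G72 : Real.Gamma ((7:ℝ)/2) = (15/8) * Real.sqrt π := by
  rw [show (7:ℝ)/2 = 5/2 + 1 by norm_num, Real.Gamma_add_one (by norm_num), G52]; ring

theorem K0_add_K1_upper_bound (β : ℝ) (hβ : 1 ≤ β) :
    K0 β + K1 β ≤ (1/2) * Real.exp (-β)
      * (8 + 1/β - 3/(16*β^2) + 45/(64*β^3)) * Real.sqrt (Real.pi / (8*β)) := by
  have hb : (0:ℝ) < β := lt_of_lt_of_le one_pos hβ
  have h2b : (0:ℝ) < 2*β := by linarith
  set g : ℝ → ℝ := fun y => (1 / Real.sqrt (1 + y^2)) * Real.exp (-β * Real.sqrt (1 + y^2))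
      + Real.exp (-β * Real.sqrt (1 + y^2)) with hg
  have hsum : K0 β + K1 β = ∫ y in Ioi (0:ℝ), g y := by
    rw [K0, K1, ← integral_add (aux_integrable0 hβ) (aux_integrable1 hβ)]
  have key := integral_image_eq_integral_abs_deriv_smul measurableSet_Ioi
      (fun z (_ : z ∈ Ioi (0:ℝ)) => (hasDeriv_f z).hasDerivWithinAt) injOn_f g
  rw [image_f] at key
  have step2 : (∫ z in Ioi (0:ℝ),
        |2*(1+2*z^2)/Real.sqrt (1+z^2)| • g (2*z*Real.sqrt (1+z^2)))
      = ∫ z in Ioi (0:ℝ), 4*Real.exp (-β) * (Real.sqrt (1+z^2) * Real.exp (-(2*β) * z^2)) := by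
    apply setIntegral_congr_fun measurableSet_Ioi
    intro z _
    have h0 : (0:ℝ) < 1 + z^2 := by positivity
    have hu : 0 < Real.sqrt (1+z^2) := Real.sqrt_pos.2 h0
    have hu2 : Real.sqrt (1+z^2)^2 = 1+z^2 := Real.sq_sqrt h0.le
    have habs : |2*(1+2*z^2)/Real.sqrt (1+z^2)| = 2*(1+2*z^2)/Real.sqrt (1+z^2) :=
      abs_of_pos (by positivity)
    have hfz : Real.sqrt (1 + (2*z*Real.sqrt (1+z^2))^2) = 1 + 2*z^2 := by
      rw [show 1 + (2*z*Real.sqrt (1+z^2))^2 = (1+2*z^2)^2 by nlinarith [hu2],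
        Real.sqrt_sq (by positivity)]
    simp only [hg, smul_eq_mul, habs, hfz]
    have hE : Real.exp (-β * (1+2*z^2)) = Real.exp (-β) * Real.exp (-(2*β)*z^2) := by
      rw [← Real.exp_add]; congr 1; ring
    rw [hE]
    have h12 : (0:ℝ) < 1 + 2*z^2 := by positivity
    field_simp
    linear_combination (-4) * hu2
  have hintPoly : IntegrableOn (fun z : ℝ =>
      4*Real.exp (-β) * ((1 + z^2/2 - z^4/8 + 3*z^6/8) * Real.exp (-(2*β)*z^2))) (Ioi 0) := by
    have h0 := (moment_integrable h2b 0).const_mul (4*Real.exp (-β))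
    have h2 := (moment_integrable h2b 2).const_mul (2*Real.exp (-β))
    have h4 := (moment_integrable h2b 4).const_mul (Real.exp (-β)/2)
    have h6 := (moment_integrable h2b 6).const_mul (3*Real.exp (-β)/2)
    have hA : IntegrableOn (fun z : ℝ => 4*Real.exp (-β) * (z^0 * Real.exp (-(2*β)*z^2)) + 2*Real.exp (-β) * (z^2 * Real.exp (-(2*β)*z^2))) (Ioi 0) := h0.add h2
    have hB : IntegrableOn (fun z : ℝ => (4*Real.exp (-β) * (z^0 * Real.exp (-(2*β)*z^2)) + 2*Real.exp (-β) * (z^2 * Real.exp (-(2*β)*z^2))) - Real.exp (-β)/2 * (z^4 * Real.exp (-(2*β)*z^2))) (Ioi 0) := hA.sub h4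
    have hC : IntegrableOn (fun z : ℝ => ((4*Real.exp (-β) * (z^0 * Real.exp (-(2*β)*z^2)) + 2*Real.exp (-β) * (z^2 * Real.exp (-(2*β)*z^2))) - Real.exp (-β)/2 * (z^4 * Real.exp (-(2*β)*z^2))) + 3*Real.exp (-β)/2 * (z^6 * Real.exp (-(2*β)*z^2))) (Ioi 0) := hB.add h6
    exact hC.congr_fun (fun x _ => by ring) measurableSet_Ioi
  have hintL : IntegrableOn (fun z : ℝ =>
      4*Real.exp (-β) * (Real.sqrt (1+z^2) * Real.exp (-(2*β)*z^2))) (Ioi 0) := by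
    have hd : IntegrableOn (fun z : ℝ =>
        4*Real.exp (-β) * ((1 + z^2) * Real.exp (-(2*β)*z^2))) (Ioi 0) := by
      have h0 := (moment_integrable h2b 0).const_mul (4*Real.exp (-β))
      have h2 := (moment_integrable h2b 2).const_mul (4*Real.exp (-β))
      have hA : IntegrableOn (fun z : ℝ => 4*Real.exp (-β) * (z^0 * Real.exp (-(2*β)*z^2)) + 4*Real.exp (-β) * (z^2 * Real.exp (-(2*β)*z^2))) (Ioi 0) := h0.add h2
      exact hA.congr_fun (fun x _ => by ring) measurableSet_Ioi
    refine hd.mono' ?_ ?_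
    · exact (Continuous.aestronglyMeasurable (by fun_prop)).restrict
    · filter_upwards [ae_restrict_mem measurableSet_Ioi] with z _
      have h0 : (0:ℝ) < 1 + z^2 := by positivity
      have hu2 : Real.sqrt (1+z^2)^2 = 1+z^2 := Real.sq_sqrt h0.le
      have h1 : (1:ℝ) ≤ Real.sqrt (1+z^2) := by nlinarith [Real.sqrt_nonneg (1+z^2)]
      have hle : Real.sqrt (1+z^2) ≤ 1 + z^2 := by nlinarith
      rw [Real.norm_eq_abs, abs_of_pos (by positivity)]
      have hE := (Real.exp_pos (-(2*β)*z^2)).le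
      exact mul_le_mul_of_nonneg_left
        (mul_le_mul_of_nonneg_right hle hE) (by positivity)
  have hmono := setIntegral_mono_on hintL hintPoly measurableSet_Ioi (fun z _ =>
    mul_le_mul_of_nonneg_left
      (mul_le_mul_of_nonneg_right (sqrt_poly_bound z) (Real.exp_pos _).le) (by positivity))
  have hmom : ∀ n : ℕ, (∫ z in Ioi (0:ℝ), z^n * Real.exp (-(2*β) * z^2))
      = (Real.sqrt (2*β) ^ (n+1))⁻¹ * (1/2) * Real.Gamma (((n:ℝ)+1)/2) := by
    intro n
    rw [moment_val h2b n, show (-((n:ℝ)+1)/2) = -(((n+1:ℕ):ℝ))/2 by push_cast; ring,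
      rpow_half_neg h2b]
  have m0 : ∫ z in Ioi (0:ℝ), z^0 * Real.exp (-(2*β)*z^2)
      = (Real.sqrt (2*β) ^ 1)⁻¹ * (1/2) * Real.sqrt π := by
    rw [hmom 0]; norm_num [G12]
  have m2 : ∫ z in Ioi (0:ℝ), z^2 * Real.exp (-(2*β)*z^2)
      = (Real.sqrt (2*β) ^ 3)⁻¹ * (1/2) * ((1/2) * Real.sqrt π) := by
    rw [hmom 2]; norm_num [G32]
  have m4 : ∫ z in Ioi (0:ℝ), z^4 * Real.exp (-(2*β)*z^2)
      = (Real.sqrt (2*β) ^ 5)⁻¹ * (1/2) * ((3/4) * Real.sqrt π) := by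
    rw [hmom 4]; norm_num [G52]
  have m6 : ∫ z in Ioi (0:ℝ), z^6 * Real.exp (-(2*β)*z^2)
      = (Real.sqrt (2*β) ^ 7)⁻¹ * (1/2) * ((15/8) * Real.sqrt π) := by
    rw [hmom 6]; norm_num [G72]
  have hsq : Real.sqrt (π/(8*β)) = Real.sqrt π / (2 * Real.sqrt (2*β)) := by
    rw [Real.sqrt_div Real.pi_pos.le, show (8*β) = 4*(2*β) by ring,
      Real.sqrt_mul (by norm_num : (0:ℝ) ≤ 4),
      show Real.sqrt 4 = 2 by
        rw [show (4:ℝ) = 2^2 by norm_num, Real.sqrt_sq (by norm_num : (0:ℝ) ≤ 2)]]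
  have heval : (∫ z in Ioi (0:ℝ),
        4*Real.exp (-β) * ((1 + z^2/2 - z^4/8 + 3*z^6/8) * Real.exp (-(2*β)*z^2)))
      = (1/2) * Real.exp (-β)
        * (8 + 1/β - 3/(16*β^2) + 45/(64*β^3)) * Real.sqrt (π/(8*β)) := by
    have h0 := (moment_integrable h2b 0).const_mul (4*Real.exp (-β))
    have h2 := (moment_integrable h2b 2).const_mul (2*Real.exp (-β))
    have h4 := (moment_integrable h2b 4).const_mul (Real.exp (-β)/2)
    have h6 := (moment_integrable h2b 6).const_mul (3*Real.exp (-β)/2)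
    have hcong : (∫ z in Ioi (0:ℝ),
          4*Real.exp (-β) * ((1 + z^2/2 - z^4/8 + 3*z^6/8) * Real.exp (-(2*β)*z^2)))
        = ∫ z in Ioi (0:ℝ),
            ((4*Real.exp (-β) * (z^0 * Real.exp (-(2*β)*z^2))
              + 2*Real.exp (-β) * (z^2 * Real.exp (-(2*β)*z^2))
              - Real.exp (-β)/2 * (z^4 * Real.exp (-(2*β)*z^2)))
              + 3*Real.exp (-β)/2 * (z^6 * Real.exp (-(2*β)*z^2))) :=
      setIntegral_congr_fun measurableSet_Ioi (fun z _ => by ring)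
    have hA : IntegrableOn (fun z : ℝ => 4*Real.exp (-β) * (z^0 * Real.exp (-(2*β)*z^2)) + 2*Real.exp (-β) * (z^2 * Real.exp (-(2*β)*z^2))) (Ioi 0) := h0.add h2
    have hB : IntegrableOn (fun z : ℝ => (4*Real.exp (-β) * (z^0 * Real.exp (-(2*β)*z^2)) + 2*Real.exp (-β) * (z^2 * Real.exp (-(2*β)*z^2))) - Real.exp (-β)/2 * (z^4 * Real.exp (-(2*β)*z^2))) (Ioi 0) := hA.sub h4
    rw [hcong, integral_add hB h6, integral_sub hA h4,
      integral_add h0 h2, integral_const_mul, integral_const_mul, integral_const_mul,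
      integral_const_mul, m0, m2, m4, m6, hsq]
    have hs0 : 0 < Real.sqrt (2*β) := Real.sqrt_pos.2 h2b
    have hs2 : Real.sqrt (2*β)^2 = 2*β := Real.sq_sqrt h2b.le
    generalize hsg : Real.sqrt (2*β) = t at hs0 hs2 ⊢
    have hβs : β = t^2/2 := by linarith
    subst hβs
    field_simp
    ring
  calc K0 β + K1 β
      = ∫ z in Ioi (0:ℝ), 4*Real.exp (-β) * (Real.sqrt (1+z^2) * Real.exp (-(2*β) * z^2)) := by
        rw [hsum, key, step2]
    _ ≤ _ := hmono.trans (le_of_eq heval)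
end

section
/- For every β ≥ 1, K₀(β) ≥ 2e^{-β}(1 - 1/(8β))√(π/(8β)). -/
open MeasureTheory Real Set

lemma gcont (β : ℝ) :
    Continuous fun y : ℝ => (1 / Real.sqrt (1 + y^2)) * Real.exp (-β * Real.sqrt (1 + y^2)) := by
  have h1 : Continuous fun y : ℝ => Real.sqrt (1 + y^2) :=
    (continuous_const.add (continuous_pow 2)).sqrt
  have h2 : ∀ y : ℝ, Real.sqrt (1 + y^2) ≠ 0 :=
    fun y => (Real.sqrt_pos.mpr (by positivity)).ne'
  exact (continuous_const.div h1 h2).mul (Real.continuous_exp.comp (continuous_const.mul h1))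

lemma g_integrableOn (β : ℝ) (hβ : 0 < β) :
    IntegrableOn (fun y : ℝ => (1 / Real.sqrt (1 + y^2)) * Real.exp (-β * Real.sqrt (1 + y^2)))
      (Ici 0) := by
  rw [integrableOn_Ici_iff_integrableOn_Ioi]
  refine Integrable.mono (exp_neg_integrableOn_Ioi 0 hβ)
    ((gcont β).aestronglyMeasurable.restrict) ?_
  filter_upwards [ae_restrict_mem measurableSet_Ioi] with y hy
  have hy0 : (0:ℝ) < y := hy
  have hs : (0:ℝ) < Real.sqrt (1 + y^2) := Real.sqrt_pos.mpr (by positivity)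
  have hs1 : (1:ℝ) ≤ Real.sqrt (1 + y^2) := by
    have := Real.sqrt_le_sqrt (show (1:ℝ) ≤ 1 + y^2 by nlinarith)
    rwa [Real.sqrt_one] at this
  have hsy : y ≤ Real.sqrt (1 + y^2) := by
    have := Real.sqrt_le_sqrt (show y^2 ≤ 1 + y^2 by nlinarith)
    rwa [Real.sqrt_sq hy0.le] at this
  rw [Real.norm_eq_abs, Real.norm_eq_abs, abs_of_nonneg (by positivity),
    abs_of_nonneg (Real.exp_pos _).le]
  calc 1 / Real.sqrt (1 + y^2) * Real.exp (-β * Real.sqrt (1 + y^2))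
      ≤ 1 * Real.exp (-β * y) := by
        apply mul_le_mul
        · rw [div_le_one hs]; exact hs1
        · exact Real.exp_le_exp.mpr (by nlinarith)
        · positivity
        · norm_num
    _ = Real.exp (-β * y) := one_mul _

lemma F_integrableOn (β : ℝ) (hβ : 1 ≤ β) :
    IntegrableOn (fun s : ℝ => Real.exp (-β * (1 + s)) / Real.sqrt (2*s + s^2)) (Ioi 0) := by
  have hβ0 : (0:ℝ) < β := lt_of_lt_of_le one_pos hβ
  have hmaj : IntegrableOn
      (fun x : ℝ => Real.exp (-β) / Real.sqrt 2 * (Real.exp (-x) * x ^ ((1:ℝ)/2 - 1)))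
      (Ioi 0) := (Real.GammaIntegral_convergent (by norm_num : (0:ℝ) < 1/2)).const_mul _
  refine Integrable.mono hmaj ?_ ?_
  · refine (ContinuousOn.div ?_ ?_ ?_).aestronglyMeasurable measurableSet_Ioi
    · exact (Real.continuous_exp.comp (continuous_const.mul
        (continuous_const.add continuous_id))).continuousOn
    · exact ((continuous_const.mul continuous_id).add (continuous_pow 2)).sqrt.continuousOn
    · intro x hx
      have hx0 : (0:ℝ) < x := hx
      exact (Real.sqrt_pos.mpr (by nlinarith)).ne'
  · filter_upwards [ae_restrict_mem measurableSet_Ioi] with x hx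
    have hx0 : (0:ℝ) < x := hx
    have hu : (0:ℝ) < Real.sqrt (2*x + x^2) := Real.sqrt_pos.mpr (by nlinarith)
    have hrp : x ^ ((1:ℝ)/2 - 1) = (Real.sqrt x)⁻¹ := by
      rw [show (1:ℝ)/2 - 1 = -(1/2) by norm_num, Real.rpow_neg hx0.le, Real.sqrt_eq_rpow]
    rw [Real.norm_eq_abs, Real.norm_eq_abs, abs_of_nonneg (by positivity),
      abs_of_nonneg (by positivity), hrp]
    have hx' : (0:ℝ) < Real.sqrt x := Real.sqrt_pos.mpr hx0
    have h2 : (0:ℝ) < Real.sqrt 2 := by positivity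
    have hlow : Real.sqrt 2 * Real.sqrt x ≤ Real.sqrt (2*x + x^2) := by
      rw [← Real.sqrt_mul (by norm_num : (0:ℝ) ≤ 2)]
      exact Real.sqrt_le_sqrt (by nlinarith)
    have hexp : Real.exp (-β * (1 + x)) ≤ Real.exp (-β) * Real.exp (-x) := by
      rw [← Real.exp_add]
      exact Real.exp_le_exp.mpr (by nlinarith)
    calc Real.exp (-β * (1 + x)) / Real.sqrt (2*x + x^2)
        ≤ (Real.exp (-β) * Real.exp (-x)) / (Real.sqrt 2 * Real.sqrt x) := by
          exact div_le_div₀ (by positivity) hexp (by positivity) hlow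
      _ = Real.exp (-β) / Real.sqrt 2 * (Real.exp (-x) * (Real.sqrt x)⁻¹) := by
          field_simp

lemma K0_eq (β : ℝ) (hβ : 1 ≤ β) :
    K0 β = ∫ s in Ioi (0:ℝ), Real.exp (-β * (1 + s)) / Real.sqrt (2*s + s^2) := by
  have hβ0 : (0:ℝ) < β := lt_of_lt_of_le one_pos hβ
  set g : ℝ → ℝ := fun y => (1 / Real.sqrt (1 + y^2)) * Real.exp (-β * Real.sqrt (1 + y^2))
    with hg
  set f : ℝ → ℝ := fun s => Real.sqrt (2*s + s^2) with hf
  set f' : ℝ → ℝ := fun s => (1 + s) / Real.sqrt (2*s + s^2) with hf'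
  have hfs : ∀ s : ℝ, 0 < s → Real.sqrt (1 + (f s)^2) = 1 + s := by
    intro s hs
    rw [hf]
    rw [Real.sq_sqrt (by nlinarith)]
    rw [show 1 + (2*s + s^2) = (1+s)^2 by ring, Real.sqrt_sq (by linarith)]
  have key : (∫ x in Ioi (0:ℝ), (g ∘ f) x * f' x) = ∫ u in Ioi (f 0), g u := by
    apply MeasureTheory.integral_comp_mul_deriv_Ioi
    · exact ((continuous_const.mul continuous_id).add (continuous_pow 2)).sqrt.continuousOn
    · refine Filter.tendsto_atTop_mono' Filter.atTop ?_ Filter.tendsto_id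
      filter_upwards [Filter.eventually_ge_atTop (0:ℝ)] with s hs
      have h := Real.sqrt_le_sqrt (show s^2 ≤ 2*s + s^2 by nlinarith)
      rw [Real.sqrt_sq hs] at h
      simpa [hf] using h
    · intro x hx
      have hx0 : (0:ℝ) < x := hx
      have hu : (0:ℝ) < 2*x + x^2 := by nlinarith
      have h1 : HasDerivAt (fun s : ℝ => 2*s + s^2) (2 + 2*x) x := by
        have := ((hasDerivAt_id x).const_mul (2:ℝ)).add (hasDerivAt_pow 2 x)
        exact this.congr_deriv (by norm_num)
      have h2 := (Real.hasDerivAt_sqrt hu.ne').comp x h1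
      have : (1 / (2 * Real.sqrt (2*x + x^2))) * (2 + 2*x) = f' x := by
        rw [hf']
        have : (0:ℝ) < Real.sqrt (2*x + x^2) := Real.sqrt_pos.mpr hu
        field_simp
      rw [← this]
      exact (h2.congr_deriv rfl).hasDerivWithinAt
    · exact (gcont β).continuousOn
    · apply (g_integrableOn β hβ0).mono_set
      rintro _ ⟨s, _, rfl⟩
      exact Real.sqrt_nonneg _
    · rw [integrableOn_Ici_iff_integrableOn_Ioi]
      apply (F_integrableOn β hβ).congr
      filter_upwards [ae_restrict_mem measurableSet_Ioi] with x hx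
      have hx0 : (0:ℝ) < x := hx
      have hu : (0:ℝ) < Real.sqrt (2*x + x^2) := Real.sqrt_pos.mpr (by nlinarith)
      have h1s : (0:ℝ) < 1 + x := by linarith
      simp only [Function.comp, hg, hf']
      rw [hfs x hx0]
      field_simp
  have hf0 : f 0 = 0 := by rw [hf]; norm_num
  rw [hf0] at key
  rw [K0, ← key]
  apply setIntegral_congr_fun measurableSet_Ioi
  intro x hx
  have hx0 : (0:ℝ) < x := hx
  have hu : (0:ℝ) < Real.sqrt (2*x + x^2) := Real.sqrt_pos.mpr (by nlinarith)
  have h1s : (0:ℝ) < 1 + x := by linarith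
  simp only [Function.comp, hg, hf']
  rw [hfs x hx0]
  field_simp

lemma I_int (β : ℝ) (hβ : 1 ≤ β) (a : ℝ) (ha : 0 < a) :
    IntegrableOn (fun x : ℝ => x ^ (a - 1) * Real.exp (-(β * x))) (Ioi 0) := by
  refine Integrable.mono (Real.GammaIntegral_convergent ha) ?_ ?_
  · refine (ContinuousOn.mul ?_ ?_).aestronglyMeasurable measurableSet_Ioi
    · exact continuousOn_id.rpow_const fun x hx => Or.inl (ne_of_gt hx)
    · exact (Real.continuous_exp.comp (continuous_const.mul continuous_id).neg).continuousOn
  · filter_upwards [ae_restrict_mem measurableSet_Ioi] with x hx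
    have hx0 : (0:ℝ) < x := hx
    have hr : (0:ℝ) ≤ x ^ (a - 1) := Real.rpow_nonneg hx0.le _
    rw [Real.norm_eq_abs, Real.norm_eq_abs, abs_of_nonneg (by positivity),
      abs_of_nonneg (by positivity), mul_comm (Real.exp (-x))]
    exact mul_le_mul_of_nonneg_left (Real.exp_le_exp.mpr (by nlinarith)) hr

lemma pointwise_FG (β : ℝ) (hβ : 1 ≤ β) (x : ℝ) (hx : x ∈ Ioi (0:ℝ)) :
    Real.exp (-β) / Real.sqrt 2 *
      (x ^ ((1:ℝ)/2 - 1) * Real.exp (-(β * x)) - 1/4 * (x ^ ((3:ℝ)/2 - 1) * Real.exp (-(β * x))))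
    ≤ Real.exp (-β * (1 + x)) / Real.sqrt (2*x + x^2) := by
  have hx0 : (0:ℝ) < x := hx
  have ht : (0:ℝ) < Real.sqrt x := Real.sqrt_pos.mpr hx0
  have h2 : (0:ℝ) < Real.sqrt 2 := by positivity
  have hu : (0:ℝ) < Real.sqrt (2*x + x^2) := Real.sqrt_pos.mpr (by nlinarith)
  have ht2 : Real.sqrt x * Real.sqrt x = x := Real.mul_self_sqrt hx0.le
  have hu2 : Real.sqrt (2*x + x^2) * Real.sqrt (2*x + x^2) = 2*x + x^2 :=
    Real.mul_self_sqrt (by nlinarith)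
  have h22 : Real.sqrt 2 * Real.sqrt 2 = 2 := Real.mul_self_sqrt (by norm_num)
  have e1 : x ^ ((1:ℝ)/2 - 1) = (Real.sqrt x)⁻¹ := by
    rw [show (1:ℝ)/2 - 1 = -(1/2) by norm_num, Real.rpow_neg hx0.le, Real.sqrt_eq_rpow]
  have e2 : x ^ ((3:ℝ)/2 - 1) = Real.sqrt x := by
    rw [show (3:ℝ)/2 - 1 = 1/2 by norm_num, Real.sqrt_eq_rpow]
  have eexp : Real.exp (-β * (1 + x)) = Real.exp (-β) * Real.exp (-(β * x)) := by
    rw [← Real.exp_add]; ring_nf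
  -- key inequality : √(2x+x²) * (4 - x) ≤ 4 * √2 * √x
  have key : Real.sqrt (2*x + x^2) * (4 - x) ≤ 4 * Real.sqrt 2 * Real.sqrt x := by
    rcases le_or_gt x 4 with h4 | h4
    · have lhs_eq : Real.sqrt (2*x + x^2) * (4 - x) = Real.sqrt ((2*x + x^2) * (4 - x)^2) := by
        rw [Real.sqrt_mul (by nlinarith), Real.sqrt_sq (by linarith)]
      have rhs_eq : 4 * Real.sqrt 2 * Real.sqrt x = Real.sqrt (32 * x) := by
        rw [show (32:ℝ) * x = 4^2 * (2 * x) by ring, Real.sqrt_mul (by positivity),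
          Real.sqrt_sq (by norm_num), Real.sqrt_mul (by norm_num)]
        ring
      rw [lhs_eq, rhs_eq]
      refine Real.sqrt_le_sqrt ?_
      nlinarith [mul_nonneg (pow_nonneg hx0.le 3) (show (0:ℝ) ≤ 6 - x by linarith)]
    · have : Real.sqrt (2*x + x^2) * (4 - x) ≤ 0 :=
        mul_nonpos_of_nonneg_of_nonpos hu.le (by linarith)
      nlinarith
  rw [e1, e2, eexp]
  have lhs_eq : Real.exp (-β) / Real.sqrt 2 *
      ((Real.sqrt x)⁻¹ * Real.exp (-(β * x)) - 1/4 * (Real.sqrt x * Real.exp (-(β * x))))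
      = (Real.exp (-β) * Real.exp (-(β * x)) * (4 - x)) / (4 * Real.sqrt 2 * Real.sqrt x) := by
    field_simp
    ring_nf
    linear_combination (-1) * ht2
  rw [lhs_eq, div_le_div_iff₀ (by positivity) hu]
  have hA : (0:ℝ) < Real.exp (-β) * Real.exp (-(β * x)) := by positivity
  nlinarith [mul_le_mul_of_nonneg_left key hA.le]

theorem K0_lower_bound (β : ℝ) (hβ : 1 ≤ β) :
    K0 β ≥ 2 * Real.exp (-β) * (1 - 1/(8*β)) * Real.sqrt (Real.pi / (8*β)) := by
  have hβ0 : (0:ℝ) < β := lt_of_lt_of_le one_pos hβ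
  rw [K0_eq β hβ, ge_iff_le]
  have hI1 := I_int β hβ (1/2) (by norm_num)
  have hI2 := I_int β hβ (3/2) (by norm_num)
  have hGint : IntegrableOn (fun x : ℝ => Real.exp (-β) / Real.sqrt 2 *
      (x ^ ((1:ℝ)/2 - 1) * Real.exp (-(β * x)) - 1/4 * (x ^ ((3:ℝ)/2 - 1) * Real.exp (-(β * x)))))
      (Ioi 0) :=
    ((hI1.sub (hI2.const_mul (1/4))).const_mul _)
  have step2 : (∫ x in Ioi (0:ℝ), Real.exp (-β) / Real.sqrt 2 *
      (x ^ ((1:ℝ)/2 - 1) * Real.exp (-(β * x)) - 1/4 * (x ^ ((3:ℝ)/2 - 1) * Real.exp (-(β * x)))))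
      ≤ ∫ s in Ioi (0:ℝ), Real.exp (-β * (1 + s)) / Real.sqrt (2*s + s^2) :=
    setIntegral_mono_on hGint (F_integrableOn β hβ) measurableSet_Ioi (pointwise_FG β hβ)
  refine le_trans (le_of_eq ?_) step2
  rw [integral_const_mul,
    MeasureTheory.integral_sub hI1 (hI2.const_mul (1/4)),
    integral_const_mul,
    Real.integral_rpow_mul_exp_neg_mul_Ioi (show (0:ℝ) < 1/2 by norm_num) hβ0,
    Real.integral_rpow_mul_exp_neg_mul_Ioi (show (0:ℝ) < 3/2 by norm_num) hβ0]
  rw [show ((3:ℝ)/2) = 1/2 + 1 by norm_num, Real.Gamma_add_one (by norm_num),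
    Real.Gamma_one_half_eq, Real.rpow_add (by positivity), Real.rpow_one,
    ← Real.sqrt_eq_rpow]
  have e5 : Real.sqrt (Real.pi / (8*β)) = Real.sqrt Real.pi / (2 * Real.sqrt 2 * Real.sqrt β) := by
    rw [Real.sqrt_div Real.pi_nonneg, show (8:ℝ)*β = 2^2*(2*β) by ring,
      Real.sqrt_mul (by positivity), Real.sqrt_sq (by norm_num),
      Real.sqrt_mul (by norm_num)]
    ring_nf
  have e6 : Real.sqrt (1/β) = (Real.sqrt β)⁻¹ := by rw [one_div, Real.sqrt_inv]
  rw [e5, e6]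
  have hsb : Real.sqrt β * Real.sqrt β = β := Real.mul_self_sqrt hβ0.le
  have hs2 : Real.sqrt 2 * Real.sqrt 2 = 2 := Real.mul_self_sqrt (by norm_num)
  have hsb0 : (0:ℝ) < Real.sqrt β := Real.sqrt_pos.mpr hβ0
  have hs20 : (0:ℝ) < Real.sqrt 2 := by positivity
  field_simp
  ring_nf
end

section
/- The function ẽ(β) = K₁(β)/K₂(β) + 3/β is strictly decreasing on (0,∞). -/
open MeasureTheory Real Set

open Filter Topology
open scoped ENNReal

noncomputable def Sq (y : ℝ) : ℝ := Real.sqrt (1 + y^2)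

lemma Sq_pos (y : ℝ) : 0 < Sq y := Real.sqrt_pos.2 (by positivity)

lemma one_le_Sq (y : ℝ) : 1 ≤ Sq y := by
  rw [show (1:ℝ) = Real.sqrt 1 by simp]
  exact Real.sqrt_le_sqrt (by nlinarith)

lemma le_Sq {y : ℝ} (hy : 0 ≤ y) : y ≤ Sq y := by
  unfold Sq
  nlinarith [Real.sq_sqrt (show (0:ℝ) ≤ 1+y^2 by positivity), Real.sqrt_nonneg (1+y^2), Sq_pos y]

lemma Sq_le {y : ℝ} (hy : 0 ≤ y) : Sq y ≤ 1 + y := by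
  rw [show (1:ℝ) + y = Real.sqrt ((1+y)^2) by rw [Real.sqrt_sq (by positivity)]]
  exact Real.sqrt_le_sqrt (by nlinarith)

lemma Sq_lt {y z : ℝ} (hy : 0 ≤ y) (h : y < z) : Sq y < Sq z :=
  Real.sqrt_lt_sqrt (by positivity) (by nlinarith)

lemma continuous_Sq : Continuous Sq :=
  Real.continuous_sqrt.comp (by continuity)

lemma hasDerivAt_Sq (y : ℝ) : HasDerivAt Sq (y / Sq y) y := by
  have h1 : HasDerivAt (fun y : ℝ => 1 + y^2) (2*y) y := by
    simpa using ((hasDerivAt_pow 2 y).const_add 1)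
  have := (Real.hasDerivAt_sqrt (by positivity : (1:ℝ)+y^2 ≠ 0)).comp y h1
  refine this.congr_deriv ?_
  unfold Sq
  field_simp

lemma tendsto_bound {β : ℝ} (hβ : 0 < β) (n : ℕ) :
    Tendsto (fun y => (1+y)^n * Real.exp (-β * y)) atTop (𝓝 0) := by
  have h0 := tendsto_pow_mul_exp_neg_atTop_nhds_zero n
  have h1 : Tendsto (fun t : ℝ => (β*t)^n * Real.exp (-(β*t))) atTop (𝓝 0) :=
    h0.comp (tendsto_id.const_mul_atTop hβ)
  have h2 : Tendsto (fun t : ℝ => t^n * Real.exp (-β*t)) atTop (𝓝 0) := by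
    have h := h1.const_mul ((1/β)^n)
    rw [mul_zero] at h
    refine h.congr fun t => ?_
    rw [mul_pow, neg_mul]
    field_simp
    rw [← mul_pow, one_div_mul_cancel hβ.ne', one_pow, one_mul]
  have h3 : Tendsto (fun y : ℝ => (1+y)^n * Real.exp (-β*(1+y))) atTop (𝓝 0) :=
    h2.comp (tendsto_atTop_add_const_left atTop 1 tendsto_id)
  have h4 := h3.mul_const (Real.exp β)
  rw [zero_mul] at h4
  refine h4.congr fun y => ?_
  rw [mul_assoc, ← Real.exp_add]
  ring_nf

lemma tendsto_bdry {β : ℝ} (hβ : 0 < β) {u : ℝ → ℝ} (hb : ∀ y, 0 ≤ y → |u y| ≤ (1+y)^4) :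
    Tendsto (fun y => u y * Real.exp (-β * Sq y)) atTop (𝓝 0) := by
  refine squeeze_zero_norm' ?_ (tendsto_bound hβ 4)
  filter_upwards [eventually_ge_atTop (0:ℝ)] with y hy
  have h1 : Real.exp (-β * Sq y) ≤ Real.exp (-β * y) := by
    apply Real.exp_le_exp.2
    nlinarith [le_Sq hy]
  calc ‖u y * Real.exp (-β * Sq y)‖ = |u y| * Real.exp (-β * Sq y) := by
        rw [norm_mul, Real.norm_eq_abs, Real.norm_eq_abs, Real.abs_exp]
    _ ≤ (1+y)^4 * Real.exp (-β * y) :=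
        mul_le_mul (hb y hy) h1 (Real.exp_pos _).le (by positivity)

lemma integ_master {β : ℝ} (hβ : 0 < β) {g : ℝ → ℝ} (hg : ContinuousOn g (Ici 0))
    (hb : ∀ y, 0 ≤ y → |g y| ≤ (1+y)^4) :
    IntegrableOn (fun y => g y * Real.exp (-β * Sq y)) (Ioi 0) := by
  apply integrable_of_isBigO_exp_neg (half_pos hβ)
  · exact hg.mul (Real.continuous_exp.comp (continuous_const.mul continuous_Sq)).continuousOn
  · rw [Asymptotics.isBigO_iff]
    refine ⟨1, ?_⟩
    have hev : ∀ᶠ y in atTop, (1+y)^4 * Real.exp (-(β/2) * y) ≤ 1 :=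
      (tendsto_bound (half_pos hβ) 4).eventually (eventually_le_nhds (show (0:ℝ) < 1 by norm_num))
    filter_upwards [eventually_ge_atTop (0:ℝ), hev] with y hy hy1
    have h1 : Real.exp (-β * Sq y) ≤ Real.exp (-β * y) := by
      apply Real.exp_le_exp.2
      nlinarith [le_Sq hy]
    have h2 : Real.exp (-β * y) = Real.exp (-(β/2) * y) * Real.exp (-(β/2) * y) := by
      rw [← Real.exp_add]; ring_nf
    calc ‖g y * Real.exp (-β * Sq y)‖ = |g y| * Real.exp (-β * Sq y) := by
          rw [norm_mul, Real.norm_eq_abs, Real.norm_eq_abs, Real.abs_exp]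
      _ ≤ (1+y)^4 * Real.exp (-β * y) :=
          mul_le_mul (hb y hy) h1 (Real.exp_pos _).le (by positivity)
      _ = ((1+y)^4 * Real.exp (-(β/2) * y)) * Real.exp (-(β/2) * y) := by rw [h2]; ring
      _ ≤ 1 * Real.exp (-(β/2) * y) := by
          apply mul_le_mul_of_nonneg_right hy1 (Real.exp_pos _).le
      _ ≤ 1 * ‖Real.exp (-(β/2) * y)‖ := by rw [Real.norm_eq_abs, Real.abs_exp]

lemma int_exp {β : ℝ} (hβ : 0 < β) :
    IntegrableOn (fun y => Real.exp (-β * Sq y)) (Ioi 0) := by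
  have := integ_master hβ (g := fun _ => (1:ℝ)) continuousOn_const
    (fun y hy => by
      rw [abs_one]
      calc (1:ℝ) = 1^4 := by norm_num
        _ ≤ (1+y)^4 := pow_le_pow_left₀ zero_le_one (by linarith) 4)
  simpa using this

lemma int_sq {β : ℝ} (hβ : 0 < β) :
    IntegrableOn (fun y => y^2 * Real.exp (-β * Sq y)) (Ioi 0) :=
  integ_master hβ (continuous_pow 2).continuousOn (fun y hy => by
    rw [abs_of_nonneg (by positivity)]
    have h2 : y^2 ≤ (1+y)^2 := pow_le_pow_left₀ hy (by linarith) 2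
    have h24 : (1+y)^2 ≤ (1+y)^4 := pow_le_pow_right₀ (by linarith) (by norm_num)
    linarith)

lemma int_sqS {β : ℝ} (hβ : 0 < β) :
    IntegrableOn (fun y => y^2 * Sq y * Real.exp (-β * Sq y)) (Ioi 0) :=
  integ_master hβ ((continuous_pow 2).mul continuous_Sq).continuousOn (fun y hy => by
    rw [abs_of_nonneg (mul_nonneg (by positivity) (Sq_pos y).le)]
    nlinarith [Sq_le hy, Sq_pos y])

lemma int_sq_div {β : ℝ} (hβ : 0 < β) :
    IntegrableOn (fun y => y^2 / Sq y * Real.exp (-β * Sq y)) (Ioi 0) :=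
  integ_master hβ
    ((continuous_pow 2).continuousOn.div continuous_Sq.continuousOn
      (fun y _ => (Sq_pos y).ne')) (fun y hy => by
    rw [abs_of_nonneg (div_nonneg (by positivity) (Sq_pos y).le), div_le_iff₀ (Sq_pos y)]
    have h2 : y^2 ≤ (1+y)^2 := pow_le_pow_left₀ hy (by linarith) 2
    have h24 : (1+y)^2 ≤ (1+y)^4 := pow_le_pow_right₀ (by linarith) (by norm_num)
    nlinarith [one_le_Sq y, pow_nonneg (show (0:ℝ) ≤ 1+y by linarith) 4])

lemma int_pow4_div {β : ℝ} (hβ : 0 < β) :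
    IntegrableOn (fun y => y^4 / Sq y * Real.exp (-β * Sq y)) (Ioi 0) :=
  integ_master hβ
    ((continuous_pow 4).continuousOn.div continuous_Sq.continuousOn
      (fun y _ => (Sq_pos y).ne')) (fun y hy => by
    rw [abs_of_nonneg (div_nonneg (by positivity) (Sq_pos y).le), div_le_iff₀ (Sq_pos y)]
    have h4 : y^4 ≤ (1+y)^4 := pow_le_pow_left₀ hy (by linarith) 4
    nlinarith [one_le_Sq y, pow_nonneg (show (0:ℝ) ≤ 1+y by linarith) 4])

lemma int_K2 {β : ℝ} (hβ : 0 < β) :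
    IntegrableOn (fun y => (2*y^2+1) / Sq y * Real.exp (-β * Sq y)) (Ioi 0) :=
  integ_master hβ
    (((continuous_const.mul (continuous_pow 2)).add continuous_const).continuousOn.div
      continuous_Sq.continuousOn (fun y _ => (Sq_pos y).ne')) (fun y hy => by
    rw [abs_of_nonneg (div_nonneg (by positivity) (Sq_pos y).le), div_le_iff₀ (Sq_pos y)]
    have hp : 2*y^2+1 ≤ (1+y)^4 := by nlinarith [sq_nonneg y, sq_nonneg (y+y^2)]
    nlinarith [one_le_Sq y, pow_nonneg (show (0:ℝ) ≤ 1+y by linarith) 4])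

noncomputable def Gf (β : ℝ) : ℝ := ∫ y in Set.Ioi (0:ℝ), y^2 * Real.exp (-β * Sq y)
noncomputable def Hf (β : ℝ) : ℝ := ∫ y in Set.Ioi (0:ℝ), y^2 * Sq y * Real.exp (-β * Sq y)

lemma hder_exp (β y : ℝ) :
    HasDerivAt (fun t => Real.exp (-β * Sq t)) (Real.exp (-β * Sq y) * (-β * (y / Sq y))) y :=
  ((hasDerivAt_Sq y).const_mul (-β)).exp

lemma ibp {β : ℝ} (hβ : 0 < β) (u u' : ℝ → ℝ) (hu : ∀ y, HasDerivAt u (u' y) y)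
    (hu0 : u 0 = 0) (hbnd : ∀ y, 0 ≤ y → |u y| ≤ (1+y)^4)
    (h1 : IntegrableOn (fun y => u' y * Real.exp (-β * Sq y)) (Ioi 0))
    (h2 : IntegrableOn (fun y => u y * (y / Sq y) * Real.exp (-β * Sq y)) (Ioi 0)) :
    ∫ y in Ioi (0:ℝ), u' y * Real.exp (-β * Sq y)
      = β * ∫ y in Ioi (0:ℝ), u y * (y / Sq y) * Real.exp (-β * Sq y) := by
  have hF : ∀ y, HasDerivAt (fun t => u t * Real.exp (-β * Sq t))
      (u' y * Real.exp (-β * Sq y) - β * (u y * (y / Sq y) * Real.exp (-β * Sq y))) y := by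
    intro y
    have := (hu y).mul (hder_exp β y)
    refine this.congr_deriv ?_
    ring
  have hint : IntegrableOn
      (fun y => u' y * Real.exp (-β * Sq y) - β * (u y * (y / Sq y) * Real.exp (-β * Sq y)))
      (Ioi 0) := h1.sub (h2.const_mul β)
  have hlim : Tendsto (fun y => u y * Real.exp (-β * Sq y)) atTop (𝓝 0) :=
    tendsto_bdry hβ hbnd
  have hucont : Continuous u := continuous_iff_continuousAt.2 fun y => (hu y).continuousAt
  have key := integral_Ioi_of_hasDerivAt_of_tendsto
    ((hucont.mul (Real.continuous_exp.comp (continuous_const.mul continuous_Sq))).continuousWithinAt)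
    (fun x _ => hF x) hint hlim
  rw [integral_sub h1 (h2.const_mul β), MeasureTheory.integral_const_mul, Pi.mul_apply, hu0] at key
  simp only [zero_mul, sub_zero, zero_sub, neg_eq_zero, mul_zero] at key
  linarith

lemma ident1 {β : ℝ} (hβ : 0 < β) :
    K1 β = β * ∫ y in Ioi (0:ℝ), y^2 / Sq y * Real.exp (-β * Sq y) := by
  have h2' : (fun y : ℝ => (id y) * (y / Sq y) * Real.exp (-β * Sq y))
      = fun y => y^2 / Sq y * Real.exp (-β * Sq y) := by
    funext y; simp only [id]; ring
  have h1' : (fun y : ℝ => (1:ℝ) * Real.exp (-β * Sq y))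
      = fun y => Real.exp (-β * Sq y) := by
    funext y; ring
  have key := ibp hβ id (fun _ => 1) (fun y => hasDerivAt_id y) rfl
    (fun y hy => by
      simp only [id]
      rw [abs_of_nonneg hy]
      calc y ≤ 1+y := by linarith
        _ = (1+y)^1 := (pow_one _).symm
        _ ≤ (1+y)^4 := pow_le_pow_right₀ (by linarith) (by norm_num))
    (by rw [h1']; exact int_exp hβ) (by rw [h2']; exact int_sq_div hβ)
  rw [h1', h2'] at key
  exact key

lemma ident2 {β : ℝ} (hβ : 0 < β) :
    3 * Gf β = β * ∫ y in Ioi (0:ℝ), y^4 / Sq y * Real.exp (-β * Sq y) := by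
  have h2' : (fun y : ℝ => y^3 * (y / Sq y) * Real.exp (-β * Sq y))
      = fun y => y^4 / Sq y * Real.exp (-β * Sq y) := by
    funext y; ring
  have h1' : (fun y : ℝ => (3*y^2) * Real.exp (-β * Sq y))
      = fun y => 3 * (y^2 * Real.exp (-β * Sq y)) := by
    funext y; ring
  have key := ibp hβ (fun y => y^3) (fun y => 3*y^2)
    (fun y => by simpa using hasDerivAt_pow 3 y)
    (by norm_num)
    (fun y hy => by
      rw [abs_of_nonneg (by positivity)]
      calc y^3 ≤ (1+y)^3 := pow_le_pow_left₀ hy (by linarith) 3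
        _ ≤ (1+y)^4 := pow_le_pow_right₀ (by linarith) (by norm_num))
    (by rw [h1']; exact (int_sq hβ).const_mul 3) (by rw [h2']; exact int_pow4_div hβ)
  rw [h1', h2'] at key
  rw [MeasureTheory.integral_const_mul] at key
  unfold Gf
  linarith

lemma ident3 {β : ℝ} (hβ : 0 < β) : K2 β = β * Gf β := by
  have hSq : ∀ y : ℝ, Sq y ^ 2 = 1 + y^2 := fun y => Real.sq_sqrt (by positivity)
  have h2' : (fun y : ℝ => (y * Sq y) * (y / Sq y) * Real.exp (-β * Sq y))
      = fun y => y^2 * Real.exp (-β * Sq y) := by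
    funext y
    have := (Sq_pos y).ne'
    field_simp
  have h1' : (fun y : ℝ => ((2*y^2+1) / Sq y) * Real.exp (-β * Sq y))
      = fun y => ((2*y^2+1) / Sq y) * Real.exp (-β * Sq y) := rfl
  have key := ibp hβ (fun y => y * Sq y) (fun y => (2*y^2+1) / Sq y)
    (fun y => by
      have h := (hasDerivAt_id y).mul (hasDerivAt_Sq y)
      refine h.congr_deriv ?_
      have hne := (Sq_pos y).ne'
      field_simp
      simp only [id]
      nlinarith [hSq y])
    (by simp [Sq])
    (fun y hy => by
      rw [abs_of_nonneg (mul_nonneg hy (Sq_pos y).le)]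
      calc y * Sq y ≤ (1+y) * (1+y) :=
            mul_le_mul (by linarith) (Sq_le hy) (Sq_pos y).le (by linarith)
        _ = (1+y)^2 := by ring
        _ ≤ (1+y)^4 := pow_le_pow_right₀ (by linarith) (by norm_num))
    (int_K2 hβ) (by rw [h2']; exact int_sq hβ)
  rw [h2'] at key
  exact key

lemma ident4 {β : ℝ} (hβ : 0 < β) : β * Hf β = K1 β + 3 * Gf β := by
  have hH : Hf β = (∫ y in Ioi (0:ℝ), y^2 / Sq y * Real.exp (-β * Sq y))
      + ∫ y in Ioi (0:ℝ), y^4 / Sq y * Real.exp (-β * Sq y) := by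
    rw [← integral_add (int_sq_div hβ) (int_pow4_div hβ)]
    unfold Hf
    congr 1
    funext y
    have hne := (Sq_pos y).ne'
    have hSq : Sq y ^ 2 = 1 + y^2 := Real.sq_sqrt (by positivity)
    field_simp
    linear_combination y^2 * hSq
  rw [hH, mul_add, ← ident1 hβ, ← ident2 hβ]

lemma Gf_pos {β : ℝ} (hβ : 0 < β) : 0 < Gf β := by
  unfold Gf
  rw [MeasureTheory.integral_pos_iff_support_of_nonneg_ae
    (ae_of_all _ fun y => by positivity) (int_sq hβ)]
  calc (0:ℝ≥0∞) < volume.restrict (Ioi (0:ℝ)) (Ioo (1:ℝ) 2) := by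
        rw [Measure.restrict_apply measurableSet_Ioo,
          inter_eq_left.2 (show Ioo (1:ℝ) 2 ⊆ Ioi 0 from fun x hx => lt_trans one_pos hx.1)]
        simp [Real.volume_Ioo]
    _ ≤ volume.restrict (Ioi (0:ℝ)) (Function.support fun y => y^2 * Real.exp (-β * Sq y)) := by
        apply measure_mono
        intro x hx
        have hx0 : (0:ℝ) < x := lt_trans one_pos hx.1
        exact ne_of_gt (by positivity)

noncomputable def pf (c y : ℝ) : ℝ := y^2 * Real.exp (-c * Sq y)
noncomputable def qf (c y : ℝ) : ℝ := y^2 * Sq y * Real.exp (-c * Sq y)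

lemma int_pf {c : ℝ} (hc : 0 < c) : Integrable (pf c) (volume.restrict (Ioi 0)) := int_sq hc
lemma int_qf {c : ℝ} (hc : 0 < c) : Integrable (qf c) (volume.restrict (Ioi 0)) := int_sqS hc

lemma key_ineq {a b : ℝ} (ha : 0 < a) (hab : a < b) : Hf b * Gf a < Hf a * Gf b := by
  have hb : 0 < b := ha.trans hab
  set μ := volume.restrict (Ioi (0:ℝ)) with hμ
  have i1 : Integrable (fun z : ℝ × ℝ => qf a z.1 * pf b z.2) (μ.prod μ) :=
    (int_qf ha).mul_prod (int_pf hb)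
  have i2 : Integrable (fun z : ℝ × ℝ => qf b z.1 * pf a z.2) (μ.prod μ) :=
    (int_qf hb).mul_prod (int_pf ha)
  have i3 : Integrable (fun z : ℝ × ℝ => pf a z.1 * qf b z.2) (μ.prod μ) :=
    (int_pf ha).mul_prod (int_qf hb)
  have i4 : Integrable (fun z : ℝ × ℝ => pf b z.1 * qf a z.2) (μ.prod μ) :=
    (int_pf hb).mul_prod (int_qf ha)
  have i12 : Integrable (fun z : ℝ × ℝ =>
      qf a z.1 * pf b z.2 - qf b z.1 * pf a z.2) (μ.prod μ) := i1.sub i2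
  have i123 : Integrable (fun z : ℝ × ℝ =>
      qf a z.1 * pf b z.2 - qf b z.1 * pf a z.2 - pf a z.1 * qf b z.2) (μ.prod μ) := i12.sub i3
  have hPint : Integrable (fun z : ℝ × ℝ =>
      qf a z.1 * pf b z.2 - qf b z.1 * pf a z.2 - pf a z.1 * qf b z.2 + pf b z.1 * qf a z.2)
      (μ.prod μ) := i123.add i4
  have hGf : ∀ c : ℝ, Gf c = ∫ y, pf c y ∂μ := fun c => rfl
  have hHf : ∀ c : ℝ, Hf c = ∫ y, qf c y ∂μ := fun c => rfl
  have hPval : (∫ z : ℝ × ℝ,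
      (qf a z.1 * pf b z.2 - qf b z.1 * pf a z.2 - pf a z.1 * qf b z.2 + pf b z.1 * qf a z.2)
        ∂(μ.prod μ)) = 2 * (Hf a * Gf b - Hf b * Gf a) := by
    rw [MeasureTheory.integral_add i123 i4, MeasureTheory.integral_sub i12 i3,
      MeasureTheory.integral_sub i1 i2,
      integral_prod_mul, integral_prod_mul, integral_prod_mul, integral_prod_mul,
      hGf, hGf, hHf, hHf]
    ring
  have hP0 : ∀ z : ℝ × ℝ,
      0 ≤ qf a z.1 * pf b z.2 - qf b z.1 * pf a z.2 - pf a z.1 * qf b z.2 + pf b z.1 * qf a z.2 := by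
    rintro ⟨y, z⟩
    have hfac : qf a y * pf b z - qf b y * pf a z - pf a y * qf b z + pf b y * qf a z
        = y^2 * z^2 * ((Sq y - Sq z) *
        (Real.exp (-a * Sq y) * Real.exp (-b * Sq z)
          - Real.exp (-b * Sq y) * Real.exp (-a * Sq z))) := by
      simp only [pf, qf]; ring
    rw [hfac]
    apply mul_nonneg (by positivity)
    rcases le_total (Sq y) (Sq z) with h | h
    · have hE : Real.exp (-a * Sq y) * Real.exp (-b * Sq z)
          - Real.exp (-b * Sq y) * Real.exp (-a * Sq z) ≤ 0 := by
        rw [← Real.exp_add, ← Real.exp_add, sub_nonpos, Real.exp_le_exp]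
        nlinarith
      nlinarith
    · have hE : 0 ≤ Real.exp (-a * Sq y) * Real.exp (-b * Sq z)
          - Real.exp (-b * Sq y) * Real.exp (-a * Sq z) := by
        rw [← Real.exp_add, ← Real.exp_add, sub_nonneg, Real.exp_le_exp]
        nlinarith
      nlinarith
  have hpos : 0 < ∫ z : ℝ × ℝ,
      (qf a z.1 * pf b z.2 - qf b z.1 * pf a z.2 - pf a z.1 * qf b z.2 + pf b z.1 * qf a z.2)
        ∂(μ.prod μ) := by
    rw [MeasureTheory.integral_pos_iff_support_of_nonneg_ae (ae_of_all _ hP0) hPint]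
    calc (0:ℝ≥0∞) < (μ.prod μ) (Ioo (1:ℝ) 2 ×ˢ Ioo (3:ℝ) 4) := by
          rw [Measure.prod_prod, hμ, Measure.restrict_apply measurableSet_Ioo,
            Measure.restrict_apply measurableSet_Ioo,
            inter_eq_left.2 (show Ioo (1:ℝ) 2 ⊆ Ioi 0 from fun x hx => lt_trans one_pos hx.1),
            inter_eq_left.2 (show Ioo (3:ℝ) 4 ⊆ Ioi 0 from fun x hx => lt_trans three_pos hx.1)]
          simp [Real.volume_Ioo]
          norm_num
      _ ≤ (μ.prod μ) (Function.support fun z : ℝ × ℝ =>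
            qf a z.1 * pf b z.2 - qf b z.1 * pf a z.2 - pf a z.1 * qf b z.2 + pf b z.1 * qf a z.2) := by
          apply measure_mono
          rintro ⟨y, z⟩ ⟨hy, hz⟩
          have hy0 : (0:ℝ) < y := lt_trans one_pos hy.1
          have h3z : (3:ℝ) < z := hz.1
          have hyz : y < z := by have := hy.2; linarith
          have hS : Sq y < Sq z := Sq_lt hy0.le hyz
          have hE : Real.exp (-a * Sq y) * Real.exp (-b * Sq z)
              < Real.exp (-b * Sq y) * Real.exp (-a * Sq z) := by
            rw [← Real.exp_add, ← Real.exp_add, Real.exp_lt_exp]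
            nlinarith
          have hfac : qf a y * pf b z - qf b y * pf a z - pf a y * qf b z + pf b y * qf a z
              = y^2 * z^2 * ((Sq y - Sq z) *
              (Real.exp (-a * Sq y) * Real.exp (-b * Sq z)
                - Real.exp (-b * Sq y) * Real.exp (-a * Sq z))) := by
            simp only [pf, qf]; ring
          apply ne_of_gt
          show (0:ℝ) < qf a y * pf b z - qf b y * pf a z - pf a y * qf b z + pf b y * qf a z
          rw [hfac]
          apply mul_pos (by positivity)
          exact mul_pos_of_neg_of_neg (by linarith) (by linarith)
  rw [hPval] at hpos
  linarith

lemma fun_eq {β : ℝ} (hβ : 0 < β) : K1 β / K2 β + 3 / β = Hf β / Gf β := by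
  have hG := Gf_pos hβ
  rw [ident3 hβ,
    show K1 β / (β * Gf β) + 3 / β = (K1 β + 3 * Gf β) / (β * Gf β) by field_simp,
    ← ident4 hβ, mul_div_mul_left _ _ (ne_of_gt hβ)]

theorem etilde_strictAntiOn :
    StrictAntiOn (fun β => K1 β / K2 β + 3 / β) (Set.Ioi (0:ℝ)) := by
  intro a ha b hb hab
  simp only
  rw [fun_eq ha, fun_eq hb, div_lt_div_iff₀ (Gf_pos hb) (Gf_pos ha)]
  exact key_ineq ha hab
end

section
/- Let β₀ > 0 and J⁰(q) = e^{-β₀√(1+|q|²)}/M(β₀) with M(β₀) = ∫_{ℝ³} e^{-β₀√(1+|q|²)} dq. Then ∫_{ℝ³} |q|² J⁰(q) dq = 12/β₀² + (3/β₀)·K₁(β₀)/K₂(β₀). -/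
open MeasureTheory Real Set

open Filter Topology

namespace J0Aux

noncomputable def s (y : ℝ) : ℝ := Real.sqrt (1 + y ^ 2)

lemma one_le_s (y : ℝ) : 1 ≤ s y :=
  (Real.le_sqrt zero_le_one (by positivity)).2 (by nlinarith)

lemma s_pos (y : ℝ) : 0 < s y := lt_of_lt_of_le one_pos (one_le_s y)

lemma sq_s (y : ℝ) : s y ^ 2 = 1 + y ^ 2 := Real.sq_sqrt (by positivity)

lemma le_s {y : ℝ} (hy : 0 ≤ y) : y ≤ s y :=
  (Real.le_sqrt hy (by positivity)).2 (by nlinarith)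

lemma s_le_two_mul {y : ℝ} (hy : 1 ≤ y) : s y ≤ 2 * y := by
  have h : s y ≤ Real.sqrt ((2*y)^2) := Real.sqrt_le_sqrt (by nlinarith)
  rwa [Real.sqrt_sq (by linarith : (0:ℝ) ≤ 2*y)] at h

lemma continuous_s : Continuous s :=
  Real.continuous_sqrt.comp (by continuity)

lemma hasDerivAt_s (y : ℝ) : HasDerivAt s (y / s y) y := by
  have h1 : HasDerivAt (fun y : ℝ => 1 + y ^ 2) (2 * y) y := by
    simpa using (hasDerivAt_pow 2 y).const_add 1
  have h2 := (Real.hasDerivAt_sqrt (by positivity : (1:ℝ) + y ^ 2 ≠ 0)).comp y h1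
  refine h2.congr_deriv ?_
  have := (s_pos y).ne'
  rw [s] at this ⊢
  field_simp

variable {β : ℝ}

/-- exponential factor -/
noncomputable def E (β y : ℝ) : ℝ := Real.exp (-β * s y)

lemma continuous_E : Continuous (E β) :=
  Real.continuous_exp.comp (continuous_const.mul continuous_s)

lemma E_pos (y : ℝ) : 0 < E β y := Real.exp_pos _

lemma hasDerivAt_E (y : ℝ) : HasDerivAt (E β) (-β * (y / s y) * E β y) y := by
  have h := ((hasDerivAt_s y).const_mul (-β)).exp
  simp only [E, neg_mul]
  refine h.congr_deriv ?_
  ring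

lemma integrable_pow_exp (hβ : 0 < β) (n : ℕ) :
    IntegrableOn (fun y : ℝ => y ^ n * Real.exp (-β * y)) (Ioi 0) := by
  have h := integrableOn_rpow_mul_exp_neg_mul_rpow (p := 1) (s := (n:ℝ)) (b := β)
    (lt_of_lt_of_le neg_one_lt_zero (Nat.cast_nonneg n)) zero_lt_one hβ
  refine h.congr_fun (fun y hy => ?_) measurableSet_Ioi
  simp only [Real.rpow_natCast, Real.rpow_one]

lemma integrableOn_pow_E (hβ : 0 < β) (n : ℕ) :
    IntegrableOn (fun y : ℝ => y ^ n * E β y) (Ioi 0) := by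
  refine (integrable_pow_exp hβ n).mono' ?_ ?_
  · exact ((continuous_pow n).mul continuous_E).aestronglyMeasurable
  · filter_upwards [ae_restrict_mem measurableSet_Ioi] with y hy
    have hy0 : (0:ℝ) < y := hy
    have h1 : E β y ≤ Real.exp (-β * y) := by
      apply Real.exp_le_exp.2
      have := le_s hy0.le
      nlinarith
    have h2 : 0 ≤ y ^ n * E β y := mul_nonneg (by positivity) (E_pos y).le
    rw [Real.norm_eq_abs, abs_of_nonneg h2]
    have : 0 ≤ y ^ n := by positivity
    nlinarith [E_pos (β := β) y]

lemma tendsto_pow_s_E (hβ : 0 < β) (n m : ℕ) :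
    Tendsto (fun y : ℝ => y ^ n * s y ^ m * E β y) atTop (𝓝 0) := by
  have hs : Tendsto s atTop atTop := by
    apply tendsto_atTop_mono' _ _ tendsto_id
    filter_upwards [eventually_ge_atTop (0:ℝ)] with y hy using le_s hy
  have h2 : Tendsto (fun x : ℝ => x ^ ((n+m : ℕ):ℝ) * Real.exp (-β * x)) atTop (𝓝 0) :=
    tendsto_rpow_mul_exp_neg_mul_atTop_nhds_zero _ β hβ
  have h3 : Tendsto (fun y : ℝ => s y ^ ((n+m:ℕ):ℝ) * Real.exp (-β * s y)) atTop (𝓝 0) :=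
    h2.comp hs
  apply squeeze_zero' _ _ h3
  · filter_upwards [eventually_ge_atTop (0:ℝ)] with y hy
    exact mul_nonneg (mul_nonneg (by positivity) (pow_nonneg (s_pos y).le m)) (E_pos y).le
  · filter_upwards [eventually_ge_atTop (0:ℝ)] with y hy
    have h4 : s y ^ ((n+m:ℕ):ℝ) = s y ^ (n+m) := by
      rw [Real.rpow_natCast]
    rw [h4, pow_add]
    have h5 : y ^ n ≤ s y ^ n := pow_le_pow_left₀ hy (le_s hy) n
    have h6 : y ^ n * s y ^ m ≤ s y ^ n * s y ^ m := by
      have := pow_nonneg (s_pos y).le m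
      nlinarith
    unfold E
    nlinarith [Real.exp_pos (-β * s y), pow_nonneg (s_pos y).le n, pow_nonneg (s_pos y).le m]

/-- Integration by parts on `(0, ∞)`. -/
lemma ibp (hβ : 0 < β) {g g' : ℝ → ℝ} (hg : ∀ y, HasDerivAt g (g' y) y) (h0 : g 0 = 0)
    (htend : Tendsto (fun y => g y * E β y) atTop (𝓝 0))
    (hint1 : IntegrableOn (fun y => g' y * E β y) (Ioi 0))
    (hint2 : IntegrableOn (fun y => (g y * y / s y) * E β y) (Ioi 0)) :
    ∫ y in Ioi (0:ℝ), g' y * E β y = β * ∫ y in Ioi (0:ℝ), (g y * y / s y) * E β y := by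
  have hd : ∀ y ∈ Ici (0:ℝ), HasDerivAt (fun y => g y * E β y)
      (g' y * E β y - β * ((g y * y / s y) * E β y)) y := by
    intro y _
    have h := (hg y).mul (hasDerivAt_E (β := β) y)
    refine h.congr_deriv ?_
    have hs := (s_pos y).ne'
    field_simp
    ring
  have hint : IntegrableOn
      (fun y => g' y * E β y - β * ((g y * y / s y) * E β y)) (Ioi 0) :=
    hint1.sub (hint2.const_mul β)
  have hres := integral_Ioi_of_hasDerivAt_of_tendsto' hd hint htend
  rw [integral_sub hint1 (hint2.const_mul β), integral_const_mul, h0, zero_mul] at hres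
  linarith


variable {β : ℝ}

lemma integrableOn_E (hβ : 0 < β) : IntegrableOn (E β) (Ioi 0) := by
  have := integrableOn_pow_E hβ 0
  simpa using this

/-- generic comparison helper -/
lemma integrable_of_le (hβ : 0 < β) {f : ℝ → ℝ} (hf : Continuous f) {C : ℝ} {n : ℕ}
    (h : ∀ y : ℝ, 0 < y → |f y| ≤ C * (E β y + y ^ n * E β y)) :
    IntegrableOn f (Ioi 0) := by
  have hmaj : IntegrableOn (fun y => C * (E β y + y ^ n * E β y)) (Ioi 0) :=
    ((integrableOn_E hβ).add (integrableOn_pow_E hβ n)).const_mul C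
  refine hmaj.mono' hf.aestronglyMeasurable ?_
  filter_upwards [ae_restrict_mem measurableSet_Ioi] with y hy
  simpa using h y hy

lemma I2_pos (hβ : 0 < β) : 0 < ∫ y in Ioi (0:ℝ), y ^ 2 * E β y := by
  have hnn : 0 ≤ᵐ[volume.restrict (Ioi (0:ℝ))] fun y => y ^ 2 * E β y := by
    filter_upwards [ae_restrict_mem measurableSet_Ioi] with y hy
    exact mul_nonneg (by positivity) (E_pos y).le
  rw [setIntegral_pos_iff_support_of_nonneg_ae hnn (integrableOn_pow_E hβ 2)]
  have hsub : Ioi (0:ℝ) ⊆ (Function.support fun y => y ^ 2 * E β y) ∩ Ioi 0 := by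
    intro y hy
    have hy0 : (0:ℝ) < y := hy
    exact ⟨Function.mem_support.2 (ne_of_gt (mul_pos (by positivity) (E_pos y))), hy⟩
  calc (0:ENNReal) < volume (Ioi (0:ℝ)) := by simp [Real.volume_Ioi]
    _ ≤ _ := measure_mono hsub

lemma relA (hβ : 0 < β) :
    K2 β = β * ∫ y in Ioi (0:ℝ), y ^ 2 * E β y := by
  have hg : ∀ y, HasDerivAt (fun y => y * s y) ((2*y^2 + 1) / s y) y := by
    intro y
    have h := (hasDerivAt_id' y).mul (hasDerivAt_s y)
    refine h.congr_deriv ?_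
    have hs := (s_pos y).ne'
    field_simp
    linear_combination sq_s y
  have htend : Tendsto (fun y => (y * s y) * E β y) atTop (𝓝 0) := by
    have h := tendsto_pow_s_E hβ 1 1
    exact h.congr (fun y => by ring)
  have hint1 : IntegrableOn (fun y => ((2*y^2 + 1) / s y) * E β y) (Ioi 0) := by
    apply integrable_of_le hβ (C := 2) (n := 2)
    · exact (((continuous_const.mul (continuous_pow 2)).add continuous_const).div
        continuous_s (fun y => (s_pos y).ne')).mul continuous_E
    · intro y hy
      have h1 := one_le_s y
      have h2 := E_pos (β := β) y
      have h3 : (2*y^2+1)/ s y ≤ 2*y^2+1 := by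
        apply div_le_self (by positivity) h1
      rw [abs_of_nonneg (by positivity)]
      have h4 : ((2*y^2+1)/ s y) * E β y ≤ (2*y^2+1) * E β y := by nlinarith
      nlinarith
  have hint2 : IntegrableOn (fun y => ((y * s y) * y / s y) * E β y) (Ioi 0) := by
    apply integrable_of_le hβ (C := 1) (n := 2)
    · exact ((((continuous_id.mul continuous_s).mul continuous_id).div
        continuous_s (fun y => (s_pos y).ne')).mul continuous_E)
    · intro y hy
      have hs := (s_pos y).ne'
      have h2 := E_pos (β := β) y
      have heq : ((y * s y) * y / s y) * E β y = y^2 * E β y := by field_simp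
      rw [heq, abs_of_nonneg (by positivity)]
      nlinarith
  have h := ibp hβ hg (by simp) htend hint1 hint2
  have heq : (fun y => ((y * s y) * y / s y) * E β y) = fun y => y^2 * E β y := by
    funext y
    have hs := (s_pos y).ne'
    field_simp
  rw [heq] at h
  rw [K2]
  convert h using 1
  rfl

lemma s_le_one_add {y : ℝ} (hy : 0 ≤ y) : s y ≤ 1 + y := by
  have h : s y ≤ Real.sqrt ((1+y)^2) := Real.sqrt_le_sqrt (by nlinarith)
  rwa [Real.sqrt_sq (by linarith : (0:ℝ) ≤ 1+y)] at h

lemma relB (hβ : 0 < β) :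
    K1 β + 3 * (∫ y in Ioi (0:ℝ), y ^ 2 * E β y)
      = β * ∫ y in Ioi (0:ℝ), y ^ 2 * s y * E β y := by
  have hg : ∀ y, HasDerivAt (fun y : ℝ => y + y ^ 3) (1 + 3 * y ^ 2) y := by
    intro y
    have h := (hasDerivAt_id' y).add (hasDerivAt_pow 3 y)
    exact h.congr_deriv (by norm_num)
  have htend : Tendsto (fun y => (y + y ^ 3) * E β y) atTop (𝓝 0) := by
    have h := (tendsto_pow_s_E (β := β) hβ 1 0).add (tendsto_pow_s_E hβ 3 0)
    rw [add_zero] at h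
    exact h.congr (fun y => by ring)
  have hint1 : IntegrableOn (fun y => (1 + 3 * y ^ 2) * E β y) (Ioi 0) := by
    apply integrable_of_le hβ (C := 3) (n := 2)
    · exact (continuous_const.add (continuous_const.mul (continuous_pow 2))).mul continuous_E
    · intro y hy
      have h2 := E_pos (β := β) y
      rw [abs_of_nonneg (by positivity)]
      nlinarith
  have hint2 : IntegrableOn (fun y => ((y + y ^ 3) * y / s y) * E β y) (Ioi 0) := by
    apply integrable_of_le hβ (C := 2) (n := 4)
    · exact (((continuous_id.add (continuous_pow 3)).mul continuous_id).div
        continuous_s (fun y => (s_pos y).ne')).mul continuous_E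
    · intro y hy
      have h1 := one_le_s y
      have h2 := E_pos (β := β) y
      have hyy : (0:ℝ) ≤ (y + y ^ 3) * y := (mul_pos (by positivity) hy).le
      have h3 : ((y + y ^ 3) * y / s y) ≤ (y + y ^ 3) * y :=
        div_le_self hyy h1
      rw [abs_of_nonneg (mul_nonneg (div_nonneg hyy (s_pos y).le) h2.le)]
      nlinarith [sq_nonneg (y^2 - 1)]
  have h := ibp hβ hg (by norm_num) htend hint1 hint2
  have heq1 : (fun y => (1 + 3 * y ^ 2) * E β y)
      = fun y => E β y + 3 * (y ^ 2 * E β y) := funext fun y => by ring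
  rw [heq1, integral_add (integrableOn_E hβ) ((integrableOn_pow_E hβ 2).const_mul 3),
    integral_const_mul] at h
  have heq2 : (fun y => ((y + y ^ 3) * y / s y) * E β y)
      = fun y => y ^ 2 * s y * E β y := by
    funext y
    have hs := (s_pos y).ne'
    field_simp
    linear_combination (-(y^2 * E β y)) * sq_s y
  rw [heq2] at h
  rw [K1]
  convert h using 2
  rfl

lemma relC' (hβ : 0 < β) :
    3 * (∫ y in Ioi (0:ℝ), y ^ 2 * E β y)
      = β * ∫ y in Ioi (0:ℝ), y ^ 4 / s y * E β y := by
  have hg : ∀ y, HasDerivAt (fun y : ℝ => y ^ 3) (3 * y ^ 2) y := by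
    intro y; simpa using hasDerivAt_pow 3 y
  have htend : Tendsto (fun y => y ^ 3 * E β y) atTop (𝓝 0) := by
    have h := tendsto_pow_s_E (β := β) hβ 3 0
    exact h.congr (fun y => by ring)
  have hint1 : IntegrableOn (fun y => (3 * y ^ 2) * E β y) (Ioi 0) := by
    apply integrable_of_le hβ (C := 3) (n := 2)
    · exact (continuous_const.mul (continuous_pow 2)).mul continuous_E
    · intro y hy
      have h2 := E_pos (β := β) y
      rw [abs_of_nonneg (by positivity)]
      nlinarith
  have hint2 : IntegrableOn (fun y => (y ^ 3 * y / s y) * E β y) (Ioi 0) := by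
    apply integrable_of_le hβ (C := 1) (n := 4)
    · exact (((continuous_pow 3).mul continuous_id).div
        continuous_s (fun y => (s_pos y).ne')).mul continuous_E
    · intro y hy
      have h1 := one_le_s y
      have h2 := E_pos (β := β) y
      have h3 : y ^ 3 * y / s y ≤ y ^ 3 * y := div_le_self (by positivity) h1
      rw [abs_of_nonneg (mul_nonneg (div_nonneg (by positivity) (s_pos y).le) h2.le)]
      nlinarith
  have h := ibp hβ hg (by norm_num) htend hint1 hint2
  have heq1 : (fun y => (3 * y ^ 2) * E β y) = fun y => 3 * (y ^ 2 * E β y) :=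
    funext fun y => by ring
  rw [heq1, integral_const_mul] at h
  have heq2 : (fun y => (y ^ 3 * y / s y) * E β y) = fun y => y ^ 4 / s y * E β y := by
    funext y
    have hs := (s_pos y).ne'
    field_simp
  rw [heq2] at h
  exact h

lemma relC (hβ : 0 < β) :
    3 * (∫ y in Ioi (0:ℝ), y ^ 2 * s y * E β y) + (∫ y in Ioi (0:ℝ), y ^ 4 / s y * E β y)
      = β * ∫ y in Ioi (0:ℝ), y ^ 4 * E β y := by
  have hg : ∀ y, HasDerivAt (fun y : ℝ => y ^ 3 * s y) (3 * y ^ 2 * s y + y ^ 4 / s y) y := by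
    intro y
    have h := (hasDerivAt_pow 3 y).mul (hasDerivAt_s y)
    refine h.congr_deriv ?_
    have hs := (s_pos y).ne'
    push_cast
    field_simp
  have hJ_int : IntegrableOn (fun y => y ^ 2 * s y * E β y) (Ioi 0) := by
    apply integrable_of_le hβ (C := 2) (n := 3)
    · exact (((continuous_pow 2).mul continuous_s)).mul continuous_E
    · intro y hy
      have h1 := s_le_one_add hy.le
      have h2 := E_pos (β := β) y
      have h0 := (s_pos y).le
      rw [abs_of_nonneg (by positivity)]
      have key : y^2 * s y ≤ y^2 * (1+y) := by nlinarith [sq_nonneg y]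
      have key2 : y^2 * (1+y) ≤ 2 * (1+y^3) := by
        nlinarith [mul_nonneg (sq_nonneg (y-1)) hy.le, sq_nonneg (y-1)]
      nlinarith [mul_le_mul_of_nonneg_right (key.trans key2) h2.le]
  have hX_int : IntegrableOn (fun y => y ^ 4 / s y * E β y) (Ioi 0) := by
    apply integrable_of_le hβ (C := 1) (n := 4)
    · exact ((continuous_pow 4).div continuous_s (fun y => (s_pos y).ne')).mul continuous_E
    · intro y hy
      have h1 := one_le_s y
      have h2 := E_pos (β := β) y
      have h3 : y ^ 4 / s y ≤ y ^ 4 := div_le_self (by positivity) h1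
      rw [abs_of_nonneg (mul_nonneg (div_nonneg (by positivity) (s_pos y).le) h2.le)]
      nlinarith
  have htend : Tendsto (fun y => y ^ 3 * s y * E β y) atTop (𝓝 0) := by
    have h := tendsto_pow_s_E (β := β) hβ 3 1
    exact h.congr (fun y => by ring)
  have hint1 : IntegrableOn (fun y => (3 * y ^ 2 * s y + y ^ 4 / s y) * E β y) (Ioi 0) := by
    have : (fun y => (3 * y ^ 2 * s y + y ^ 4 / s y) * E β y)
        = fun y => 3 * (y ^ 2 * s y * E β y) + y ^ 4 / s y * E β y := funext fun y => by ring
    rw [this]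
    exact (hJ_int.const_mul 3).add hX_int
  have hint2 : IntegrableOn (fun y => (y ^ 3 * s y * y / s y) * E β y) (Ioi 0) := by
    have : (fun y => (y ^ 3 * s y * y / s y) * E β y) = fun y => y ^ 4 * E β y := by
      funext y
      have hs := (s_pos y).ne'
      field_simp
    rw [this]
    exact integrableOn_pow_E hβ 4
  have h := ibp hβ hg (by simp) htend hint1 hint2
  have heq1 : (fun y => (3 * y ^ 2 * s y + y ^ 4 / s y) * E β y)
      = fun y => 3 * (y ^ 2 * s y * E β y) + y ^ 4 / s y * E β y := funext fun y => by ring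
  rw [heq1, integral_add (hJ_int.const_mul 3) hX_int, integral_const_mul] at h
  have heq2 : (fun y => (y ^ 3 * s y * y / s y) * E β y) = fun y => y ^ 4 * E β y := by
    funext y
    have hs := (s_pos y).ne'
    field_simp
  rw [heq2] at h
  exact h

lemma spherical (f : ℝ → ℝ) :
    (∫ q : EuclideanSpace ℝ (Fin 3), f ‖q‖)
      = (3 * (volume (Metric.ball (0 : EuclideanSpace ℝ (Fin 3)) 1)).toReal)
        * ∫ y in Ioi (0:ℝ), y ^ 2 * f y := by
  rw [integral_fun_norm_addHaar (volume : Measure (EuclideanSpace ℝ (Fin 3))) f]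
  rw [finrank_euclideanSpace_fin]
  simp only [smul_eq_mul, nsmul_eq_mul]
  norm_num
  simp [measureReal_def]
  ring

end J0Aux

namespace J0Aux
lemma ball_toReal_pos :
    0 < (volume (Metric.ball (0 : EuclideanSpace ℝ (Fin 3)) 1)).toReal :=
  ENNReal.toReal_pos (Metric.measure_ball_pos volume 0 one_pos).ne' measure_ball_lt_top.ne

lemma Mfun_eq (β : ℝ) :
    Mfun β = (3 * (volume (Metric.ball (0 : EuclideanSpace ℝ (Fin 3)) 1)).toReal)
      * ∫ y in Ioi (0:ℝ), y ^ 2 * E β y :=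
  spherical (fun r => E β r)

end J0Aux

open J0Aux in
theorem integral_normsq_J0 (β₀ : ℝ) (hβ₀ : 0 < β₀) :
    (∫ q : EuclideanSpace ℝ (Fin 3),
        ‖q‖^2 * (Real.exp (-β₀ * Real.sqrt (1 + ‖q‖^2)) / Mfun β₀))
      = 12 / β₀^2 + (3 / β₀) * (K1 β₀ / K2 β₀) := by
  set c : ℝ := (volume (Metric.ball (0 : EuclideanSpace ℝ (Fin 3)) 1)).toReal with hc
  have hcpos : 0 < c := ball_toReal_pos
  set A : ℝ := ∫ y in Ioi (0:ℝ), y ^ 2 * E β₀ y with hA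
  set J : ℝ := ∫ y in Ioi (0:ℝ), y ^ 2 * s y * E β₀ y with hJ
  set X : ℝ := ∫ y in Ioi (0:ℝ), y ^ 4 / s y * E β₀ y with hX
  set I4 : ℝ := ∫ y in Ioi (0:ℝ), y ^ 4 * E β₀ y with hI4
  have hApos : 0 < A := I2_pos hβ₀
  have hK2 : K2 β₀ = β₀ * A := relA hβ₀
  have hB : K1 β₀ + 3 * A = β₀ * J := relB hβ₀
  have hC : 3 * J + X = β₀ * I4 := relC hβ₀
  have hC' : 3 * A = β₀ * X := relC' hβ₀
  have hM : Mfun β₀ = 3 * c * A := Mfun_eq β₀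
  have h1 : (∫ q : EuclideanSpace ℝ (Fin 3),
        ‖q‖^2 * (Real.exp (-β₀ * Real.sqrt (1 + ‖q‖^2)) / Mfun β₀))
      = (3 * c) * ∫ y in Ioi (0:ℝ), y ^ 2 * (y ^ 2 * (E β₀ y / Mfun β₀)) :=
    spherical (fun r => r ^ 2 * (E β₀ r / Mfun β₀))
  rw [h1]
  have h2 : (fun y => y ^ 2 * (y ^ 2 * (E β₀ y / Mfun β₀)))
      = fun y => (y ^ 4 * E β₀ y) / Mfun β₀ := funext fun y => by ring
  rw [h2, integral_div]
  have hI4v : β₀ ^ 2 * I4 = 3 * K1 β₀ + 12 * A := by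
    linear_combination -β₀ * hC - 3 * hB - hC'
  have hβne := hβ₀.ne'
  have hAne := hApos.ne'
  have hI4' : I4 = (3 * K1 β₀ + 12 * A) / β₀ ^ 2 := by
    field_simp
    linear_combination hI4v
  rw [hM, hK2, ← hI4, hI4']
  field_simp
  ring
end
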